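/- Let G ∈ G°_xy. Then g_a(G) < g_a^+(G) if and only if ε^+(G) = 0 and θ(G) = 1. -/

import Mathlib

open scoped Classical

/-- A finite simple graph with vertex labels in `ℕ`. -/
structure SGraph where
  verts : Finset ℕ
  edges : Finset (Sym2 ℕ)
  edge_sub : ∀ e ∈ edges, ∀ v ∈ e, v ∈ verts
  loopless : ∀ e ∈ edges, ¬ e.IsDiag

namespace SGraph

/-- Adjacency. -/
def Adj (G : SGraph) (u v : ℕ) : Prop := s(u, v) ∈ G.edges

/-- Reachability by walks. -/
def Reach (G : SGraph) : ℕ → ℕ → Prop := Relation.ReflTransGen G.Adj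

/-- A graph is connected if it is nonempty and every two vertices are joined by a walk. -/
def Connected (G : SGraph) : Prop :=
  G.verts.Nonempty ∧ ∀ u ∈ G.verts, ∀ v ∈ G.verts, G.Reach u v

/-- Number of connected components. -/
noncomputable def compCount (G : SGraph) : ℕ :=
  Set.ncard {S : Set ℕ | ∃ v ∈ G.verts, S = {u | G.Reach v u}}

/-- Darts (directed edges). -/
def darts (G : SGraph) : Set (ℕ × ℕ) := {p | s(p.1, p.2) ∈ G.edges}

/-- Number of isolated vertices. -/
noncomputable def isolCount (G : SGraph) : ℕ :=
  (G.verts.filter (fun v => ∀ e ∈ G.edges, v ∉ e)).card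

end SGraph

/-- An orientable combinatorial embedding of `G`, given by a rotation system:
a permutation of the darts that fixes sources and is a single cycle on the darts
leaving each vertex (the local rotation). -/
structure Rot (G : SGraph) where
  r : ℕ × ℕ → ℕ × ℕ
  bij : Set.BijOn r G.darts G.darts
  fix : ∀ d ∈ G.darts, (r d).1 = d.1
  cyc : ∀ d ∈ G.darts, ∀ d' ∈ G.darts, d.1 = d'.1 → ∃ n : ℕ, r^[n] d = d'

/-- The face-tracing map: follow an edge, then turn by the rotation. -/
def faceMap {G : SGraph} (R : Rot G) : ℕ × ℕ → ℕ × ℕ := fun d => R.r (d.2, d.1)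

/-- The number of faces of an embedding: orbits of the face-tracing map together with
one face for each isolated vertex. -/
noncomputable def faceCount {G : SGraph} (R : Rot G) : ℕ :=
  Set.ncard {S : Set (ℕ × ℕ) | ∃ d ∈ G.darts, S = {d' | ∃ n : ℕ, (faceMap R)^[n] d = d'}}
    + G.isolCount

/-- Twice the genus of the embedding `R`, by the Euler formula `2g = 2c - n + m - f`
(summed over the `c` connected components). -/
noncomputable def eulerVal (G : SGraph) (R : Rot G) : ℤ :=
  2 * G.compCount - G.verts.card + G.edges.card - faceCount R

/-- The (orientable) genus of a graph: minimum genus of an embedding. -/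
noncomputable def SGraph.genus (G : SGraph) : ℕ :=
  sInf {k : ℕ | ∃ R : Rot G, 2 * (k : ℤ) = eulerVal G R}

/-- A minor-operation: an (ordered) edge together with a flag,
`false` = deletion, `true` = contraction (of the second vertex into the first). -/
abbrev Op := (ℕ × ℕ) × Bool

namespace SGraph

/-- Deletion of the edge `ab`. -/
def del (G : SGraph) (a b : ℕ) : SGraph where
  verts := G.verts
  edges := G.edges.erase s(a, b)
  edge_sub := fun e he => G.edge_sub e (Finset.mem_of_mem_erase he)
  loopless := fun e he => G.loopless e (Finset.mem_of_mem_erase he)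

/-- Contraction of the edge `ab`: the vertex `b` is identified with `a`
(arising multiple edges are simplified, loops are discarded). -/
def con (G : SGraph) (a b : ℕ) : SGraph where
  verts := insert a (G.verts.erase b)
  edges := (G.edges.image (Sym2.map (fun w => if w = b then a else w))).filter
      (fun e => ¬ e.IsDiag)
  edge_sub := by
    intro e he v hv
    rcases Finset.mem_image.mp (Finset.mem_filter.mp he).1 with ⟨e0, he0, rfl⟩
    rcases Sym2.mem_map.mp hv with ⟨w, hw, hwv⟩
    by_cases hwb : w = b
    · simp only [hwb, if_pos rfl] at hwv
      exact hwv ▸ Finset.mem_insert_self _ _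
    · simp only [if_neg hwb] at hwv
      exact hwv ▸ Finset.mem_insert_of_mem
        (Finset.mem_erase.mpr ⟨hwb, G.edge_sub e0 he0 w hw⟩)
  loopless := fun e he => (Finset.mem_filter.mp he).2

/-- Applying a minor-operation to a graph. -/
def apply (G : SGraph) (μ : Op) : SGraph :=
  bif μ.2 then G.con μ.1.1 μ.1.2 else G.del μ.1.1 μ.1.2

/-- The set of minor-operations available for a graph (without terminals). -/
def ops (G : SGraph) : Set Op := {μ | s(μ.1.1, μ.1.2) ∈ G.edges}

/-- `G` is minor-tight on a set `E0` of its edges if every minor-operation on an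
edge of `E0` decreases the genus of `G`. -/
def MinorTightOn (G : SGraph) (E0 : Finset (Sym2 ℕ)) : Prop :=
  ∀ μ ∈ G.ops, s(μ.1.1, μ.1.2) ∈ E0 → (G.apply μ).genus < G.genus

/-- One minor-operation step, from `G` to `H`. -/
def StepTo (G H : SGraph) : Prop := ∃ μ ∈ G.ops, H = G.apply μ

/-- `H` is a minor of `G`: it is obtained from `G` by a sequence of minor-operations. -/
def IsMinorOf (H G : SGraph) : Prop := Relation.ReflTransGen StepTo G H

/-- `H` is a proper minor of `G`. -/
def IsProperMinorOf (H G : SGraph) : Prop := Relation.TransGen StepTo G H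

/-- Subgraph relation. -/
def IsSubgraphOf (H G : SGraph) : Prop := H.verts ⊆ G.verts ∧ H.edges ⊆ G.edges

/-- Deletion of a set of vertices (with all incident edges). -/
noncomputable def delVerts (G : SGraph) (S : Finset ℕ) : SGraph where
  verts := G.verts \ S
  edges := G.edges.filter (fun e => ∀ v ∈ e, v ∉ S)
  edge_sub := by
    intro e he v hv
    rcases Finset.mem_filter.mp he with ⟨he0, hS⟩
    exact Finset.mem_sdiff.mpr ⟨G.edge_sub e he0 v hv, hS v hv⟩
  loopless := fun e he => G.loopless e (Finset.mem_filter.mp he).1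

/-- `G` is `k`-connected. -/
def KConnected (G : SGraph) (k : ℕ) : Prop :=
  k < G.verts.card ∧ ∀ S : Finset ℕ, S ⊆ G.verts → S.card < k → (G.delVerts S).Connected

end SGraph

/-- `G` is an obstruction for the orientable surface `S_k`:
`g(G) = k+1` and every proper minor of `G` has genus at most `k`. -/
def IsObstruction (G : SGraph) (k : ℕ) : Prop :=
  G.genus = k + 1 ∧ ∀ H : SGraph, H.IsProperMinorOf G → H.genus ≤ k

/-- A graph with two distinct terminals `x` and `y` (the class `G_xy`). -/
structure TGraph where
  G : SGraph
  x : ℕ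
  y : ℕ
  hx : x ∈ G.verts
  hy : y ∈ G.verts
  hxy : x ≠ y

namespace TGraph

/-- `G` has no edge `xy` (i.e. `G ∈ G°_xy`). -/
def NoXY (G : TGraph) : Prop := s(G.x, G.y) ∉ G.G.edges

/-- `G` has the edge `xy`. -/
def HasXY (G : TGraph) : Prop := s(G.x, G.y) ∈ G.G.edges

/-- `G⁺`: `G` together with the edge `xy`. -/
def plus (G : TGraph) : TGraph where
  G := { verts := G.G.verts
         edges := insert s(G.x, G.y) G.G.edges
         edge_sub := by
           intro e he v hv
           rcases Finset.mem_insert.mp he with h | h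
           · subst h
             rcases Sym2.mem_iff.mp hv with rfl | rfl
             · exact G.hx
             · exact G.hy
           · exact G.G.edge_sub e h v hv
         loopless := by
           intro e he
           rcases Finset.mem_insert.mp he with h | h
           · subst h
             simpa [Sym2.mk_isDiag_iff] using G.hxy
           · exact G.G.loopless e h }
  x := G.x
  y := G.y
  hx := G.hx
  hy := G.hy
  hxy := G.hxy

/-- The set of minor-operations available for a graph with terminals: the edge `xy`
may not be contracted, and a contraction never contracts a terminal into a
non-terminal (the contracted vertex `μ.1.2` is not a terminal). -/
def ops (G : TGraph) : Set Op :=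
  {μ | s(μ.1.1, μ.1.2) ∈ G.G.edges ∧ (μ.2 = true → μ.1.2 ≠ G.x ∧ μ.1.2 ≠ G.y)}

/-- Applying a minor-operation to a graph with terminals. -/
noncomputable def apply (G : TGraph) (μ : Op) : TGraph :=
  if h : μ.2 = true → μ.1.2 ≠ G.x ∧ μ.1.2 ≠ G.y then
    { G := G.G.apply μ
      x := G.x
      y := G.y
      hx := by
        cases hb : μ.2 with
        | false => simpa [SGraph.apply, hb, SGraph.del] using G.hx
        | true =>
            simp only [SGraph.apply, hb, cond_true, SGraph.con]
            exact Finset.mem_insert_of_mem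
              (Finset.mem_erase.mpr ⟨fun hc => (h hb).1 hc.symm, G.hx⟩)
      hy := by
        cases hb : μ.2 with
        | false => simpa [SGraph.apply, hb, SGraph.del] using G.hy
        | true =>
            simp only [SGraph.apply, hb, cond_true, SGraph.con]
            exact Finset.mem_insert_of_mem
              (Finset.mem_erase.mpr ⟨fun hc => (h hb).2 hc.symm, G.hy⟩)
      hxy := G.hxy }
  else G

/-- One minor-operation step (for graphs with terminals). -/
def StepTo (G H : TGraph) : Prop := ∃ μ ∈ G.ops, H = G.apply μ

/-- `H` is a minor of `G` in `G_xy`. -/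
def IsMinorOf (H G : TGraph) : Prop := Relation.ReflTransGen StepTo G H

end TGraph

/-- The graph parameter `g`: the genus. -/
noncomputable def gP (G : TGraph) : ℤ := G.G.genus

/-- The graph parameter `g⁺`: the genus of `G⁺`. -/
noncomputable def gpP (G : TGraph) : ℤ := G.plus.G.genus

/-- The embedding `R` of `G` is `xy`-alternating: some face contains
`(x, y, x, y)` as a cyclic subsequence. -/
def IsAlt (G : TGraph) (R : Rot G.G) : Prop :=
  ∃ d ∈ G.G.darts, d.1 = G.x ∧ ∃ i j k : ℕ,
    0 < i ∧ i < j ∧ j < k ∧ k < Function.minimalPeriod (faceMap R) d ∧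
    ((faceMap R)^[i] d).1 = G.y ∧ ((faceMap R)^[j] d).1 = G.x ∧
    ((faceMap R)^[k] d).1 = G.y

/-- `G` is `xy`-alternating: it has an `xy`-alternating minimum genus embedding. -/
def IsXYAlt (G : TGraph) : Prop :=
  ∃ R : Rot G.G, 2 * (G.G.genus : ℤ) = eulerVal G.G R ∧ IsAlt G R

/-- The parameter `ε`. -/
noncomputable def epsP (G : TGraph) : ℤ := if IsXYAlt G then 1 else 0

/-- The parameter `ε⁺`, `ε⁺(G) = ε(G⁺)`. -/
noncomputable def epspP (G : TGraph) : ℤ := epsP G.plus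

/-- The alternating genus `g_a = g - ε`. -/
noncomputable def gaP (G : TGraph) : ℤ := gP G - epsP G

/-- The parameter `g_a⁺ = g⁺ - ε⁺`. -/
noncomputable def gapP (G : TGraph) : ℤ := gpP G - epspP G

/-- The parameter `θ = g⁺ - g`. -/
noncomputable def thetaP (G : TGraph) : ℤ := gpP G - gP G

/-- The parameter `η(G₁,G₂) = θ(G₁) + θ(G₂) - ε⁺(G₁)ε⁺(G₂)`. -/
noncomputable def etaP (G1 G2 : TGraph) : ℤ :=
  thetaP G1 + thetaP G2 - epspP G1 * epspP G2

/-- `↓k(P, G)`: the set of minor-operations that decrease the parameter `P` by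
at least `k`. -/
noncomputable def decSet (P : TGraph → ℤ) (k : ℤ) (G : TGraph) : Set Op :=
  {μ | μ ∈ G.ops ∧ P (G.apply μ) ≤ P G - k}

/-- The critical class `C(P)`: graphs all of whose minor-operations decrease `P`. -/
noncomputable def crit (P : TGraph → ℤ) : Set TGraph :=
  {G | G.ops = decSet P 1 G}

/-- The critical class `C°(P)`: members of `C(P)` without the edge `xy`. -/
noncomputable def critO (P : TGraph → ℤ) : Set TGraph :=
  {G | G.NoXY ∧ G.ops = decSet P 1 G}

/-- `C_k(P)`: members `G` of `C(P)` with `P(G) = k + 1`. -/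
noncomputable def critk (P : TGraph → ℤ) (k : ℕ) : Set TGraph :=
  {G | G ∈ crit P ∧ P G = k + 1}

/-- `C°_k(P)`: members `G` of `C°(P)` with `P(G) = k + 1`. -/
noncomputable def critOk (P : TGraph → ℤ) (k : ℕ) : Set TGraph :=
  {G | G ∈ critO P ∧ P G = k + 1}

/-- Hoppers of level 0. -/
noncomputable def hopper0 : Set TGraph :=
  {G | G.NoXY ∧ G.ops = decSet gP 1 G ∪ decSet gapP 2 G ∧ G ∉ critO gP}

/-- Hoppers of level 1. -/
noncomputable def hopper1 : Set TGraph :=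
  {G | G.NoXY ∧ G.ops = decSet gapP 1 G ∪ decSet gP 2 G ∧ G ∉ critO gapP}

/-- `b = s(a,b)` is a bar of the dumbbell `G`: a cut-edge whose deletion separates
the terminals. -/
def IsDumbbellBar (G : TGraph) (a b : ℕ) : Prop :=
  s(a, b) ∈ G.G.edges ∧ ¬ (G.G.del a b).Reach G.x G.y

/-- A dumbbell: a graph in `G°_xy` with a cut-edge separating the two terminals. -/
def IsDumbbell (G : TGraph) : Prop := G.NoXY ∧ ∃ a b : ℕ, IsDumbbellBar G a b

/-- The class `D` of dumbbells `G` with a bar `b` such that `θ(G) = 0`, every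
minor-operation other than those on the bar decreases `g`, and `ε⁺(G/b) = 1`. -/
noncomputable def classD : Set TGraph :=
  {G | G.NoXY ∧ ∃ a b : ℕ, IsDumbbellBar G a b ∧ ((a, b), true) ∈ G.ops ∧
    thetaP G = 0 ∧
    (∀ μ ∈ G.ops, s(μ.1.1, μ.1.2) ≠ s(a, b) → gP (G.apply μ) ≤ gP G - 1) ∧
    epspP (G.apply ((a, b), true)) = 1}

/-- `G` is an `xy`-sum with parts `G₁` and `G₂`. -/
structure XYSum (G G1 G2 : TGraph) : Prop where
  x1 : G1.x = G.x
  y1 : G1.y = G.y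
  x2 : G2.x = G.x
  y2 : G2.y = G.y
  no1 : G1.NoXY
  no2 : G2.NoXY
  vint : G1.G.verts ∩ G2.G.verts = {G.x, G.y}
  vuni : G.G.verts = G1.G.verts ∪ G2.G.verts
  edges : G.G.edges = G1.G.edges ∪ G2.G.edges ∨
    G.G.edges = insert s(G.x, G.y) (G1.G.edges ∪ G2.G.edges)
namespace AltAux

variable {α : Type*}

def orb (φ : α → α) (d : α) : Set α := {e | ∃ n : ℕ, φ^[n] d = e}

def orbSet (φ : α → α) (D : Set α) : Set (Set α) := {S | ∃ d ∈ D, S = orb φ d}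

lemma mem_orb_self (φ : α → α) (d : α) : d ∈ orb φ d := ⟨0, rfl⟩

lemma orb_subset_of_closed {φ : α → α} {S : Set α} (h : ∀ s ∈ S, φ s ∈ S) {d : α}
    (hd : d ∈ S) : orb φ d ⊆ S := by
  rintro e ⟨n, rfl⟩
  induction n with
  | zero => exact hd
  | succ n ih => rw [Function.iterate_succ_apply']; exact h _ ih

lemma iterate_mem {φ : α → α} {D : Set α} (hm : Set.MapsTo φ D D) {d : α} (hd : d ∈ D)
    (n : ℕ) : φ^[n] d ∈ D := orb_subset_of_closed (fun s hs => hm hs) hd ⟨n, rfl⟩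

lemma orb_subset {φ : α → α} {D : Set α} (hm : Set.MapsTo φ D D) {d : α} (hd : d ∈ D) :
    orb φ d ⊆ D := orb_subset_of_closed (fun s hs => hm hs) hd

lemma iterate_injOn {φ : α → α} {D : Set α} (hbij : Set.BijOn φ D D) :
    ∀ n, ∀ d ∈ D, ∀ e ∈ D, φ^[n] d = φ^[n] e → d = e := by
  intro n
  induction n with
  | zero => intro d _ e _ h; exact h
  | succ n ih =>
    intro d hd e he h
    rw [Function.iterate_succ_apply, Function.iterate_succ_apply] at h
    exact hbij.injOn hd he (ih _ (hbij.mapsTo hd) _ (hbij.mapsTo he) h)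

lemma iterate_fixed_mul {φ : α → α} {d : α} {T : ℕ} (h : φ^[T] d = d) (n : ℕ) :
    φ^[n * T] d = d := by
  induction n with
  | zero => simp
  | succ n ih =>
    rw [Nat.succ_mul, Function.iterate_add_apply, h, ih]

lemma periodic_of_mem {φ : α → α} {D : Set α} (hD : D.Finite) (hbij : Set.BijOn φ D D)
    {d : α} (hd : d ∈ D) : ∃ T : ℕ, 0 < T ∧ φ^[T] d = d := by
  obtain ⟨i, j, hij, h⟩ := Set.Finite.exists_lt_map_eq_of_forall_mem
    (f := fun n : ℕ => φ^[n] d) (fun n => iterate_mem hbij.mapsTo hd n) hD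
  refine ⟨j - i, by omega, ?_⟩
  have h2 : φ^[i] (φ^[j - i] d) = φ^[i] d := by
    rw [← Function.iterate_add_apply, show i + (j - i) = j by omega]
    exact h.symm
  exact iterate_injOn hbij i _ (iterate_mem hbij.mapsTo hd _) _ hd h2

lemma mem_orb_symm_of_periodic {φ : α → α} {d e : α} {T : ℕ} (hT : 0 < T)
    (hTd : φ^[T] d = d) (he : e ∈ orb φ d) : d ∈ orb φ e := by
  obtain ⟨n, rfl⟩ := he
  refine ⟨n * T - n, ?_⟩
  rw [← Function.iterate_add_apply, show n * T - n + n = n * T by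
    have := Nat.le_mul_of_pos_right n hT; omega]
  exact iterate_fixed_mul hTd n

lemma orb_mono_of_mem {φ : α → α} {d e : α} (he : e ∈ orb φ d) : orb φ e ⊆ orb φ d := by
  obtain ⟨n, rfl⟩ := he
  rintro c ⟨m, rfl⟩
  exact ⟨m + n, Function.iterate_add_apply φ m n d⟩

lemma orb_eq_of_periodic {φ : α → α} {d e : α} {T : ℕ} (hT : 0 < T)
    (hTd : φ^[T] d = d) (he : e ∈ orb φ d) : orb φ e = orb φ d :=
  Set.Subset.antisymm (orb_mono_of_mem he)
    (orb_mono_of_mem (mem_orb_symm_of_periodic hT hTd he))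

lemma orb_eq_of_mem {φ : α → α} {D : Set α} (hD : D.Finite) (hbij : Set.BijOn φ D D)
    {d e : α} (hd : d ∈ D) (he : e ∈ orb φ d) : orb φ e = orb φ d := by
  obtain ⟨T, hT, hTd⟩ := periodic_of_mem hD hbij hd
  exact orb_eq_of_periodic hT hTd he

lemma orb_congr {φ φ' : α → α} {d : α} (h : ∀ c ∈ orb φ d, φ' c = φ c) :
    orb φ' d = orb φ d := by
  have key : ∀ n, φ'^[n] d = φ^[n] d := by
    intro n
    induction n with
    | zero => rfl
    | succ n ih =>
      rw [Function.iterate_succ_apply', Function.iterate_succ_apply', ih, h _ ⟨n, rfl⟩]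
  ext e
  constructor <;> rintro ⟨n, rfl⟩
  · exact ⟨n, (key n).symm⟩
  · exact ⟨n, key n⟩

lemma orb_eq_image_of_periodic {φ : α → α} {d : α} {T : ℕ} (hT : 0 < T)
    (hTd : φ^[T] d = d) : orb φ d = (fun s => φ^[s] d) '' Set.Iio T := by
  ext e
  constructor
  · rintro ⟨n, rfl⟩
    refine ⟨n % T, Set.mem_Iio.mpr (Nat.mod_lt _ hT), ?_⟩
    show φ^[n % T] d = φ^[n] d
    conv_rhs => rw [← Nat.mod_add_div' n T]
    rw [Function.iterate_add_apply, iterate_fixed_mul hTd]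
  · rintro ⟨s, _, rfl⟩
    exact ⟨s, rfl⟩

lemma orbSet_subset {φ : α → α} {D : Set α} (hm : Set.MapsTo φ D D) :
    orbSet φ D ⊆ {S | S ⊆ D} := by
  rintro S ⟨d, hd, rfl⟩
  exact orb_subset hm hd

lemma orbSet_finite {φ : α → α} {D : Set α} (hD : D.Finite) (hm : Set.MapsTo φ D D) :
    (orbSet φ D).Finite :=
  hD.finite_subsets.subset (orbSet_subset hm)


section Surgery

variable {φ φ' : α → α} {D : Set α} {z₁ z₂ p q : α}

lemma split_iterate (hbij : Set.BijOn φ D D) (hp : p ∈ D)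
    (h2 : φ' z₁ = φ q) (h5 : ∀ e ∈ D, e ≠ p → e ≠ q → φ' e = φ e)
    {m : ℕ} (hm0 : 0 < m) (hmT : m < Function.minimalPeriod φ p) (hqm : φ^[m] p = q) :
    ∀ s, 1 ≤ s → s ≤ Function.minimalPeriod φ p - m → φ'^[s] z₁ = φ^[m + s] p := by
  have hinj := Function.iterate_injOn_Iio_minimalPeriod (f := φ) (x := p)
  set T := Function.minimalPeriod φ p with hT
  intro s
  induction s with
  | zero => intro h; simp at h
  | succ n ih =>
    intro _ hle
    rcases Nat.eq_zero_or_pos n with rfl | hn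
    · rw [Function.iterate_one, h2, ← hqm]
      exact (Function.iterate_succ_apply' φ m p).symm
    · have ihv := ih hn (by omega)
      rw [Function.iterate_succ_apply', ihv]
      have hcD : φ^[m + n] p ∈ D := iterate_mem hbij.mapsTo hp _
      have hne_p : φ^[m + n] p ≠ p := by
        intro hc
        have := hinj (show m + n ∈ Set.Iio T by simp; omega)
          (show 0 ∈ Set.Iio T by simp; omega) hc
        omega
      have hne_q : φ^[m + n] p ≠ q := by
        intro hc
        rw [← hqm] at hc
        have := hinj (show m + n ∈ Set.Iio T by simp; omega)
          (show m ∈ Set.Iio T by simp; omega) hc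
        omega
      rw [h5 _ hcD hne_p hne_q]
      exact (Function.iterate_succ_apply' φ (m + n) p).symm

lemma surgery_split (hD : D.Finite) (hbij : Set.BijOn φ D D)
    (hz₁ : z₁ ∉ D) (hz₂ : z₂ ∉ D) (hzz : z₁ ≠ z₂)
    (hp : p ∈ D) (hq : q ∈ D)
    (h1 : φ' p = z₁) (h2 : φ' z₁ = φ q) (h3 : φ' q = z₂) (h4 : φ' z₂ = φ p)
    (h5 : ∀ e ∈ D, e ≠ p → e ≠ q → φ' e = φ e)
    {m : ℕ} (hm0 : 0 < m) (hmT : m < Function.minimalPeriod φ p) (hqm : φ^[m] p = q) :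
    (orbSet φ' (insert z₁ (insert z₂ D))).ncard = (orbSet φ D).ncard + 1 := by
  have hinj := Function.iterate_injOn_Iio_minimalPeriod (f := φ) (x := p)
  set T := Function.minimalPeriod φ p with hT
  have hTpos : 0 < T := by omega
  have hTd : φ^[T] p = p := Function.iterate_minimalPeriod
  have hA := split_iterate hbij hp h2 h5 hm0 hmT hqm
  have hAret : φ'^[T - m] z₁ = p := by
    rw [hA (T - m) (by omega) le_rfl, show m + (T - m) = T by omega, hTd]
  have hper1 : φ'^[T - m + 1] z₁ = z₁ := by
    rw [Function.iterate_succ_apply', hAret, h1]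
  have hB : ∀ t, 1 ≤ t → t ≤ m → φ'^[t] z₂ = φ^[t] p := by
    intro t
    induction t with
    | zero => intro h; simp at h
    | succ n ih =>
      intro _ hle
      rcases Nat.eq_zero_or_pos n with rfl | hn
      · rw [Function.iterate_one, Function.iterate_one, h4]
      · have ihv := ih hn (by omega)
        rw [Function.iterate_succ_apply', ihv]
        have hcD : φ^[n] p ∈ D := iterate_mem hbij.mapsTo hp _
        have hne_p : φ^[n] p ≠ p := by
          intro hc
          have := hinj (show n ∈ Set.Iio T by simp; omega)
            (show 0 ∈ Set.Iio T by simp; omega) hc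
          omega
        have hne_q : φ^[n] p ≠ q := by
          intro hc
          rw [← hqm] at hc
          have := hinj (show n ∈ Set.Iio T by simp; omega)
            (show m ∈ Set.Iio T by simp; omega) hc
          omega
        rw [h5 _ hcD hne_p hne_q]
        exact (Function.iterate_succ_apply' φ n p).symm
  have hBret : φ'^[m] z₂ = q := by rw [hB m hm0 le_rfl, hqm]
  have hper2 : φ'^[m + 1] z₂ = z₂ := by
    rw [Function.iterate_succ_apply', hBret, h3]
  set A := orb φ' z₁ with hAdef
  set B := orb φ' z₂ with hBdef
  have hz₂A : z₂ ∉ A := by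
    rw [hAdef, orb_eq_image_of_periodic (by omega) hper1]
    rintro ⟨s, hs, hc⟩
    simp only [Set.mem_Iio] at hs
    have hc' : φ'^[s] z₁ = z₂ := hc
    rcases Nat.eq_zero_or_pos s with rfl | hs0
    · exact hzz hc'
    · rw [hA s hs0 (by omega)] at hc'
      exact hz₂ (hc' ▸ iterate_mem hbij.mapsTo hp _)
  have hz₁B : z₁ ∉ B := by
    rw [hBdef, orb_eq_image_of_periodic (by omega) hper2]
    rintro ⟨s, hs, hc⟩
    simp only [Set.mem_Iio] at hs
    have hc' : φ'^[s] z₂ = z₁ := hc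
    rcases Nat.eq_zero_or_pos s with rfl | hs0
    · exact hzz hc'.symm
    · rw [hB s hs0 (by omega)] at hc'
      exact hz₁ (hc' ▸ iterate_mem hbij.mapsTo hp _)
  have hABne : A ≠ B := fun hc => hz₂A (by rw [hc]; exact mem_orb_self _ _)
  have horbD : ∀ e ∈ D, e ∈ orb φ p → orb φ' e = A ∨ orb φ' e = B := by
    rintro e heD ⟨n, rfl⟩
    have hmod : φ^[n % T] p = φ^[n] p := Function.iterate_mod_minimalPeriod_eq
    have hiT : n % T < T := Nat.mod_lt _ hTpos
    by_cases hi0 : n % T = 0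
    · left
      refine orb_eq_of_periodic (show 0 < T - m + 1 by omega) hper1 ?_
      have hep : φ^[n] p = p := by rw [← hmod, hi0, Function.iterate_zero_apply]
      rw [hep, ← hAret]
      exact ⟨T - m, rfl⟩
    · by_cases him : n % T ≤ m
      · right
        refine orb_eq_of_periodic (show 0 < m + 1 by omega) hper2 ?_
        rw [← hmod, ← hB (n % T) (by omega) him]
        exact ⟨n % T, rfl⟩
      · left
        refine orb_eq_of_periodic (show 0 < T - m + 1 by omega) hper1 ?_
        rw [← hmod, ← show φ'^[n % T - m] z₁ = φ^[n % T] p by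
          rw [hA (n % T - m) (by omega) (by omega), show m + (n % T - m) = n % T by omega]]
        exact ⟨n % T - m, rfl⟩
  have horbD' : ∀ e ∈ D, e ∉ orb φ p → orb φ' e = orb φ e := by
    intro e heD heO
    refine orb_congr ?_
    intro c hc
    have hcD : c ∈ D := orb_subset hbij.mapsTo heD hc
    refine h5 _ hcD ?_ ?_
    · intro hcp
      rw [hcp] at hc
      exact heO (by rw [orb_eq_of_mem hD hbij heD hc]; exact mem_orb_self _ _)
    · intro hcq
      rw [hcq] at hc
      have h6 : orb φ q = orb φ e := orb_eq_of_mem hD hbij heD hc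
      have h7 : orb φ q = orb φ p := orb_eq_of_mem hD hbij hp ⟨m, hqm⟩
      exact heO (by rw [← h7, h6]; exact mem_orb_self _ _)
  have hset : orbSet φ' (insert z₁ (insert z₂ D)) =
      insert A (insert B (orbSet φ D \ {orb φ p})) := by
    ext S
    constructor
    · rintro ⟨e, he, rfl⟩
      rcases Set.mem_insert_iff.mp he with rfl | he
      · exact Set.mem_insert _ _
      rcases Set.mem_insert_iff.mp he with rfl | heD
      · exact Set.mem_insert_of_mem _ (Set.mem_insert _ _)
      by_cases hmem : e ∈ orb φ p
      · rcases horbD e heD hmem with h | h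
        · rw [h]; exact Set.mem_insert _ _
        · rw [h]; exact Set.mem_insert_of_mem _ (Set.mem_insert _ _)
      · refine Set.mem_insert_of_mem _ (Set.mem_insert_of_mem _ ⟨?_, ?_⟩)
        · rw [horbD' e heD hmem]; exact ⟨e, heD, rfl⟩
        · rw [horbD' e heD hmem]
          simp only [Set.mem_singleton_iff]
          intro hc
          exact hmem (hc ▸ mem_orb_self φ e)
    · intro hS
      rcases Set.mem_insert_iff.mp hS with rfl | hS
      · exact ⟨z₁, Set.mem_insert _ _, rfl⟩
      rcases Set.mem_insert_iff.mp hS with rfl | hS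
      · exact ⟨z₂, Set.mem_insert_of_mem _ (Set.mem_insert _ _), rfl⟩
      obtain ⟨⟨e, heD, rfl⟩, hne⟩ := hS
      have hmem : e ∉ orb φ p := by
        intro hc
        exact hne (by simp only [Set.mem_singleton_iff]; exact orb_eq_of_mem hD hbij hp hc)
      exact ⟨e, Set.mem_insert_of_mem _ (Set.mem_insert_of_mem _ heD),
        (horbD' e heD hmem).symm⟩
  have hXfin : (orbSet φ D).Finite := orbSet_finite hD hbij.mapsTo
  have hOp : orb φ p ∈ orbSet φ D := ⟨p, hp, rfl⟩
  have hAX : A ∉ orbSet φ D :=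
    fun hc => hz₁ (orbSet_subset hbij.mapsTo hc (mem_orb_self φ' z₁))
  have hBX : B ∉ orbSet φ D :=
    fun hc => hz₂ (orbSet_subset hbij.mapsTo hc (mem_orb_self φ' z₂))
  have hdfin : (orbSet φ D \ {orb φ p}).Finite := hXfin.diff
  have hBmem : B ∉ orbSet φ D \ {orb φ p} := fun hc => hBX hc.1
  have hAmem : A ∉ insert B (orbSet φ D \ {orb φ p}) := by
    intro hc
    rcases Set.mem_insert_iff.mp hc with hc | hc
    · exact hABne hc
    · exact hAX hc.1
  rw [hset, Set.ncard_insert_of_notMem hAmem (hdfin.insert _),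
    Set.ncard_insert_of_notMem hBmem hdfin]
  have := Set.ncard_diff_singleton_add_one hOp hXfin
  omega


lemma surgery_merge (hD : D.Finite) (hbij : Set.BijOn φ D D)
    (hz₁ : z₁ ∉ D) (hz₂ : z₂ ∉ D) (hzz : z₁ ≠ z₂)
    (hp : p ∈ D) (hq : q ∈ D)
    (h1 : φ' p = z₁) (h2 : φ' z₁ = φ q) (h3 : φ' q = z₂) (h4 : φ' z₂ = φ p)
    (h5 : ∀ e ∈ D, e ≠ p → e ≠ q → φ' e = φ e)
    (hnq : q ∉ orb φ p) :
    (orbSet φ D).ncard = (orbSet φ' (insert z₁ (insert z₂ D))).ncard + 1 := by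
  have hinjp := Function.iterate_injOn_Iio_minimalPeriod (f := φ) (x := p)
  have hinjq := Function.iterate_injOn_Iio_minimalPeriod (f := φ) (x := q)
  set Tp := Function.minimalPeriod φ p with hTp
  set Tq := Function.minimalPeriod φ q with hTq
  have hTppos : 0 < Tp := by
    obtain ⟨T, hT0, hTd⟩ := periodic_of_mem hD hbij hp
    exact Function.IsPeriodicPt.minimalPeriod_pos hT0 hTd
  have hTqpos : 0 < Tq := by
    obtain ⟨T, hT0, hTd⟩ := periodic_of_mem hD hbij hq
    exact Function.IsPeriodicPt.minimalPeriod_pos hT0 hTd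
  have hTpd : φ^[Tp] p = p := Function.iterate_minimalPeriod
  have hTqd : φ^[Tq] q = q := Function.iterate_minimalPeriod
  have hp_not_q_orb : p ∉ orb φ q := by
    intro hc
    exact hnq (by rw [orb_eq_of_mem hD hbij hq hc]; exact mem_orb_self _ _)
  have k1 : ∀ s, 1 ≤ s → s ≤ Tq → φ'^[1 + s] p = φ^[s] q := by
    intro s
    induction s with
    | zero => intro h; simp at h
    | succ n ih =>
      intro _ hle
      rcases Nat.eq_zero_or_pos n with rfl | hn
      · have e1 : φ'^[1 + (0+1)] p = φ' (φ' p) := by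
          rw [show 1 + (0+1) = 2 from rfl]
          rw [show (2:ℕ) = 1 + 1 from rfl, Function.iterate_succ_apply', Function.iterate_one]
        rw [e1, h1, h2, Function.iterate_one]
      · have ihv := ih hn (by omega)
        have e1 : φ'^[1 + (n+1)] p = φ' (φ'^[1+n] p) := by
          rw [show 1 + (n+1) = (1+n) + 1 from rfl]
          exact Function.iterate_succ_apply' φ' (1+n) p
        rw [e1, ihv]
        have hcD : φ^[n] q ∈ D := iterate_mem hbij.mapsTo hq _
        have hne_q : φ^[n] q ≠ q := by
          intro hc
          have := hinjq (show n ∈ Set.Iio Tq by simp; omega)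
            (show 0 ∈ Set.Iio Tq by simp; omega) hc
          omega
        have hne_p : φ^[n] q ≠ p := fun hc => hp_not_q_orb (hc ▸ ⟨n, rfl⟩)
        rw [h5 _ hcD hne_p hne_q]
        exact (Function.iterate_succ_apply' φ n q).symm
  have k1ret : φ'^[1 + Tq] p = q := by rw [k1 Tq hTqpos le_rfl, hTqd]
  have k2 : φ'^[2 + Tq] p = z₂ := by
    rw [show 2 + Tq = (1 + Tq) + 1 by omega, Function.iterate_succ_apply', k1ret, h3]
  have k3 : ∀ t, 1 ≤ t → t ≤ Tp → φ'^[2 + Tq + t] p = φ^[t] p := by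
    intro t
    induction t with
    | zero => intro h; simp at h
    | succ n ih =>
      intro _ hle
      rcases Nat.eq_zero_or_pos n with rfl | hn
      · rw [show 2 + Tq + (0+1) = (2 + Tq) + 1 by omega, Function.iterate_succ_apply', k2,
          h4, Function.iterate_one]
      · have ihv := ih hn (by omega)
        rw [show 2 + Tq + (n+1) = (2 + Tq + n) + 1 by omega, Function.iterate_succ_apply', ihv]
        have hcD : φ^[n] p ∈ D := iterate_mem hbij.mapsTo hp _
        have hne_p : φ^[n] p ≠ p := by
          intro hc
          have := hinjp (show n ∈ Set.Iio Tp by simp; omega)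
            (show 0 ∈ Set.Iio Tp by simp; omega) hc
          omega
        have hne_q : φ^[n] p ≠ q := fun hc => hnq (hc ▸ ⟨n, rfl⟩)
        rw [h5 _ hcD hne_p hne_q]
        exact (Function.iterate_succ_apply' φ n p).symm
  have hper : φ'^[2 + Tq + Tp] p = p := by rw [k3 Tp hTppos le_rfl, hTpd]
  have hperpos : 0 < 2 + Tq + Tp := by omega
  set M := orb φ' p with hMdef
  have hz₁M : z₁ ∈ M := ⟨1, by rw [Function.iterate_one, h1]⟩
  have hz₂M : z₂ ∈ M := ⟨2 + Tq, k2⟩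
  have horbP : ∀ e ∈ D, e ∈ orb φ p → orb φ' e = M := by
    rintro e heD ⟨n, rfl⟩
    refine orb_eq_of_periodic hperpos hper ?_
    have hmod : φ^[n % Tp] p = φ^[n] p := Function.iterate_mod_minimalPeriod_eq
    by_cases hi0 : n % Tp = 0
    · rw [← hmod, hi0, Function.iterate_zero_apply]
      exact mem_orb_self _ _
    · rw [← hmod, ← k3 (n % Tp) (by omega) (le_of_lt (Nat.mod_lt _ hTppos))]
      exact ⟨2 + Tq + n % Tp, rfl⟩
  have horbQ : ∀ e ∈ D, e ∈ orb φ q → orb φ' e = M := by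
    rintro e heD ⟨n, rfl⟩
    refine orb_eq_of_periodic hperpos hper ?_
    have hmod : φ^[n % Tq] q = φ^[n] q := Function.iterate_mod_minimalPeriod_eq
    by_cases hi0 : n % Tq = 0
    · rw [← hmod, hi0, Function.iterate_zero_apply, ← k1ret]
      exact ⟨1 + Tq, rfl⟩
    · rw [← hmod, ← k1 (n % Tq) (by omega) (le_of_lt (Nat.mod_lt _ hTqpos))]
      exact ⟨1 + n % Tq, rfl⟩
  have horbD' : ∀ e ∈ D, e ∉ orb φ p → e ∉ orb φ q → orb φ' e = orb φ e := by
    intro e heD hep heq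
    refine orb_congr ?_
    intro c hc
    have hcD : c ∈ D := orb_subset hbij.mapsTo heD hc
    refine h5 _ hcD ?_ ?_
    · intro hcp
      rw [hcp] at hc
      exact hep (by rw [orb_eq_of_mem hD hbij heD hc]; exact mem_orb_self _ _)
    · intro hcq
      rw [hcq] at hc
      exact heq (by rw [orb_eq_of_mem hD hbij heD hc]; exact mem_orb_self _ _)
  have hset : orbSet φ' (insert z₁ (insert z₂ D)) =
      insert M ((orbSet φ D \ {orb φ p}) \ {orb φ q}) := by
    ext S
    constructor
    · rintro ⟨e, he, rfl⟩
      rcases Set.mem_insert_iff.mp he with rfl | he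
      · rw [orb_eq_of_periodic hperpos hper hz₁M]
        exact Set.mem_insert _ _
      rcases Set.mem_insert_iff.mp he with rfl | heD
      · rw [orb_eq_of_periodic hperpos hper hz₂M]
        exact Set.mem_insert _ _
      by_cases hmem : e ∈ orb φ p
      · rw [horbP e heD hmem]; exact Set.mem_insert _ _
      by_cases hmem2 : e ∈ orb φ q
      · rw [horbQ e heD hmem2]; exact Set.mem_insert _ _
      · refine Set.mem_insert_of_mem _ ⟨⟨?_, ?_⟩, ?_⟩
        · rw [horbD' e heD hmem hmem2]; exact ⟨e, heD, rfl⟩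
        · rw [horbD' e heD hmem hmem2]
          simp only [Set.mem_singleton_iff]
          intro hc; exact hmem (hc ▸ mem_orb_self φ e)
        · rw [horbD' e heD hmem hmem2]
          simp only [Set.mem_singleton_iff]
          intro hc; exact hmem2 (hc ▸ mem_orb_self φ e)
    · intro hS
      rcases Set.mem_insert_iff.mp hS with rfl | hS
      · exact ⟨p, Set.mem_insert_of_mem _ (Set.mem_insert_of_mem _ hp), rfl⟩
      obtain ⟨⟨⟨e, heD, rfl⟩, hne1⟩, hne2⟩ := hS
      have hm1 : e ∉ orb φ p := fun hc =>
        hne1 (by simp only [Set.mem_singleton_iff]; exact orb_eq_of_mem hD hbij hp hc)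
      have hm2 : e ∉ orb φ q := fun hc =>
        hne2 (by simp only [Set.mem_singleton_iff]; exact orb_eq_of_mem hD hbij hq hc)
      exact ⟨e, Set.mem_insert_of_mem _ (Set.mem_insert_of_mem _ heD),
        (horbD' e heD hm1 hm2).symm⟩
  have hXfin := orbSet_finite hD hbij.mapsTo
  have hOp : orb φ p ∈ orbSet φ D := ⟨p, hp, rfl⟩
  have hOqp : orb φ q ∈ orbSet φ D \ {orb φ p} := by
    refine ⟨⟨q, hq, rfl⟩, ?_⟩
    simp only [Set.mem_singleton_iff]
    intro hc
    exact hnq (by rw [← hc]; exact mem_orb_self _ _)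
  have hfin1 : (orbSet φ D \ {orb φ p}).Finite := hXfin.diff
  have hfin2 : ((orbSet φ D \ {orb φ p}) \ {orb φ q}).Finite := hfin1.diff
  have hMX : M ∉ (orbSet φ D \ {orb φ p}) \ {orb φ q} := by
    intro hc
    exact hz₁ (orbSet_subset hbij.mapsTo hc.1.1 hz₁M)
  rw [hset, Set.ncard_insert_of_notMem hMX hfin2]
  have e1 := Set.ncard_diff_singleton_add_one hOqp hfin1
  have e2 := Set.ncard_diff_singleton_add_one hOp hXfin
  omega

lemma surgery_one (hD : D.Finite) (hbij : Set.BijOn φ D D)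
    (hz₁ : z₁ ∉ D) (hz₂ : z₂ ∉ D) (hzz : z₁ ≠ z₂)
    (hq : q ∈ D)
    (h2 : φ' z₁ = φ q) (h3 : φ' q = z₂) (h4 : φ' z₂ = z₁)
    (h5 : ∀ e ∈ D, e ≠ q → φ' e = φ e) :
    (orbSet φ' (insert z₁ (insert z₂ D))).ncard = (orbSet φ D).ncard := by
  have hinjq := Function.iterate_injOn_Iio_minimalPeriod (f := φ) (x := q)
  set Tq := Function.minimalPeriod φ q with hTq
  have hTqpos : 0 < Tq := by
    obtain ⟨T, hT0, hTd⟩ := periodic_of_mem hD hbij hq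
    exact Function.IsPeriodicPt.minimalPeriod_pos hT0 hTd
  have hTqd : φ^[Tq] q = q := Function.iterate_minimalPeriod
  have k1 : ∀ s, 1 ≤ s → s ≤ Tq → φ'^[s] z₁ = φ^[s] q := by
    intro s
    induction s with
    | zero => intro h; simp at h
    | succ n ih =>
      intro _ hle
      rcases Nat.eq_zero_or_pos n with rfl | hn
      · rw [Function.iterate_one, Function.iterate_one, h2]
      · have ihv := ih hn (by omega)
        rw [Function.iterate_succ_apply', ihv]
        have hcD : φ^[n] q ∈ D := iterate_mem hbij.mapsTo hq _
        have hne_q : φ^[n] q ≠ q := by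
          intro hc
          have := hinjq (show n ∈ Set.Iio Tq by simp; omega)
            (show 0 ∈ Set.Iio Tq by simp; omega) hc
          omega
        rw [h5 _ hcD hne_q]
        exact (Function.iterate_succ_apply' φ n q).symm
  have k1ret : φ'^[Tq] z₁ = q := by rw [k1 Tq hTqpos le_rfl, hTqd]
  have k2 : φ'^[Tq + 1] z₁ = z₂ := by
    rw [Function.iterate_succ_apply', k1ret, h3]
  have hper : φ'^[Tq + 2] z₁ = z₁ := by
    rw [show Tq + 2 = (Tq + 1) + 1 from rfl, Function.iterate_succ_apply', k2, h4]
  have hperpos : 0 < Tq + 2 := by omega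
  set M := orb φ' z₁ with hMdef
  have hz₂M : z₂ ∈ M := ⟨Tq + 1, k2⟩
  have hqM : q ∈ M := ⟨Tq, k1ret⟩
  have horbQ : ∀ e ∈ D, e ∈ orb φ q → orb φ' e = M := by
    rintro e heD ⟨n, rfl⟩
    refine orb_eq_of_periodic hperpos hper ?_
    have hmod : φ^[n % Tq] q = φ^[n] q := Function.iterate_mod_minimalPeriod_eq
    by_cases hi0 : n % Tq = 0
    · rw [← hmod, hi0, Function.iterate_zero_apply]
      exact hqM
    · rw [← hmod, ← k1 (n % Tq) (by omega) (le_of_lt (Nat.mod_lt _ hTqpos))]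
      exact ⟨n % Tq, rfl⟩
  have horbD' : ∀ e ∈ D, e ∉ orb φ q → orb φ' e = orb φ e := by
    intro e heD heq
    refine orb_congr ?_
    intro c hc
    have hcD : c ∈ D := orb_subset hbij.mapsTo heD hc
    refine h5 _ hcD ?_
    intro hcq
    rw [hcq] at hc
    exact heq (by rw [orb_eq_of_mem hD hbij heD hc]; exact mem_orb_self _ _)
  have hset : orbSet φ' (insert z₁ (insert z₂ D)) =
      insert M (orbSet φ D \ {orb φ q}) := by
    ext S
    constructor
    · rintro ⟨e, he, rfl⟩
      rcases Set.mem_insert_iff.mp he with rfl | he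
      · exact Set.mem_insert _ _
      rcases Set.mem_insert_iff.mp he with rfl | heD
      · rw [orb_eq_of_periodic hperpos hper hz₂M]
        exact Set.mem_insert _ _
      by_cases hmem : e ∈ orb φ q
      · rw [horbQ e heD hmem]; exact Set.mem_insert _ _
      · refine Set.mem_insert_of_mem _ ⟨?_, ?_⟩
        · rw [horbD' e heD hmem]; exact ⟨e, heD, rfl⟩
        · rw [horbD' e heD hmem]
          simp only [Set.mem_singleton_iff]
          intro hc; exact hmem (hc ▸ mem_orb_self φ e)
    · intro hS
      rcases Set.mem_insert_iff.mp hS with rfl | hS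
      · exact ⟨z₁, Set.mem_insert _ _, rfl⟩
      obtain ⟨⟨e, heD, rfl⟩, hne⟩ := hS
      have hm : e ∉ orb φ q := fun hc =>
        hne (by simp only [Set.mem_singleton_iff]; exact orb_eq_of_mem hD hbij hq hc)
      exact ⟨e, Set.mem_insert_of_mem _ (Set.mem_insert_of_mem _ heD),
        (horbD' e heD hm).symm⟩
  have hXfin := orbSet_finite hD hbij.mapsTo
  have hOq : orb φ q ∈ orbSet φ D := ⟨q, hq, rfl⟩
  have hfin1 : (orbSet φ D \ {orb φ q}).Finite := hXfin.diff
  have hMX : M ∉ orbSet φ D \ {orb φ q} := by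
    intro hc
    exact hz₁ (orbSet_subset hbij.mapsTo hc.1 (mem_orb_self _ _))
  rw [hset, Set.ncard_insert_of_notMem hMX hfin1]
  have e1 := Set.ncard_diff_singleton_add_one hOq hXfin
  omega

lemma surgery_two (hD : D.Finite) (hbij : Set.BijOn φ D D)
    (hz₁ : z₁ ∉ D) (hz₂ : z₂ ∉ D) (hzz : z₁ ≠ z₂)
    (h2 : φ' z₁ = z₂) (h4 : φ' z₂ = z₁)
    (h5 : ∀ e ∈ D, φ' e = φ e) :
    (orbSet φ' (insert z₁ (insert z₂ D))).ncard = (orbSet φ D).ncard + 1 := by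
  have hper : φ'^[2] z₁ = z₁ := by
    rw [show (2:ℕ) = 1 + 1 from rfl, Function.iterate_succ_apply', Function.iterate_one, h2, h4]
  set M := orb φ' z₁ with hMdef
  have hz₂M : z₂ ∈ M := ⟨1, by rw [Function.iterate_one, h2]⟩
  have horbD' : ∀ e ∈ D, orb φ' e = orb φ e := fun e heD =>
    orb_congr (fun c hc => h5 _ (orb_subset hbij.mapsTo heD hc))
  have hset : orbSet φ' (insert z₁ (insert z₂ D)) = insert M (orbSet φ D) := by
    ext S
    constructor
    · rintro ⟨e, he, rfl⟩
      rcases Set.mem_insert_iff.mp he with rfl | he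
      · exact Set.mem_insert _ _
      rcases Set.mem_insert_iff.mp he with rfl | heD
      · rw [orb_eq_of_periodic (by omega) hper hz₂M]
        exact Set.mem_insert _ _
      · exact Set.mem_insert_of_mem _ ⟨e, heD, horbD' e heD⟩
    · intro hS
      rcases Set.mem_insert_iff.mp hS with rfl | hS
      · exact ⟨z₁, Set.mem_insert _ _, rfl⟩
      obtain ⟨e, heD, rfl⟩ := hS
      exact ⟨e, Set.mem_insert_of_mem _ (Set.mem_insert_of_mem _ heD),
        (horbD' e heD).symm⟩
  have hXfin := orbSet_finite hD hbij.mapsTo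
  have hMX : M ∉ orbSet φ D := fun hc =>
    hz₁ (orbSet_subset hbij.mapsTo hc (mem_orb_self _ _))
  rw [hset, Set.ncard_insert_of_notMem hMX hXfin]

end Surgery


section Ins

variable {f g : α → α} {S : Set α} {a z d : α}

noncomputable def ins (f : α → α) (a z : α) : α → α :=
  fun d => if d = a then z else if d = z then f a else f d

lemma ins_apply_a : ins f a z a = z := by simp [ins]

lemma ins_apply_z (hza : z ≠ a) : ins f a z z = f a := by simp [ins, hza]

lemma ins_apply (hda : d ≠ a) (hdz : d ≠ z) : ins f a z d = f d := by simp [ins, hda, hdz]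

lemma ins_bijOn (hf : Set.BijOn f S S) (ha : a ∈ S) (hz : z ∉ S) :
    Set.BijOn (ins f a z) (insert z S) (insert z S) := by
  have hza : z ≠ a := fun hc => hz (hc ▸ ha)
  refine ⟨?_, ?_, ?_⟩
  · intro d hd
    by_cases hda : d = a
    · subst hda; rw [ins_apply_a]; exact Set.mem_insert _ _
    by_cases hdz : d = z
    · subst hdz; rw [ins_apply_z hza]; exact Set.mem_insert_of_mem _ (hf.mapsTo ha)
    · have hdS : d ∈ S := (Set.mem_insert_iff.mp hd).resolve_left hdz
      rw [ins_apply hda hdz]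
      exact Set.mem_insert_of_mem _ (hf.mapsTo hdS)
  · intro u hu v hv huv
    by_cases hu1 : u = a <;> by_cases hv1 : v = a
    · rw [hu1, hv1]
    · exfalso
      rw [hu1, ins_apply_a] at huv
      by_cases hv2 : v = z
      · rw [hv2, ins_apply_z hza] at huv
        exact hz (huv ▸ hf.mapsTo ha)
      · have hvS : v ∈ S := (Set.mem_insert_iff.mp hv).resolve_left hv2
        rw [ins_apply hv1 hv2] at huv
        exact hz (huv ▸ hf.mapsTo hvS)
    · exfalso
      rw [hv1, ins_apply_a] at huv
      by_cases hu2 : u = z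
      · rw [hu2, ins_apply_z hza] at huv
        exact hz (huv.symm ▸ hf.mapsTo ha)
      · have huS : u ∈ S := (Set.mem_insert_iff.mp hu).resolve_left hu2
        rw [ins_apply hu1 hu2] at huv
        exact hz (huv.symm ▸ hf.mapsTo huS)
    · by_cases hu2 : u = z <;> by_cases hv2 : v = z
      · rw [hu2, hv2]
      · exfalso
        have hvS : v ∈ S := (Set.mem_insert_iff.mp hv).resolve_left hv2
        rw [hu2, ins_apply_z hza, ins_apply hv1 hv2] at huv
        exact hv1 (hf.injOn hvS ha huv.symm)
      · exfalso
        have huS : u ∈ S := (Set.mem_insert_iff.mp hu).resolve_left hu2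
        rw [hv2, ins_apply_z hza, ins_apply hu1 hu2] at huv
        exact hu1 (hf.injOn huS ha huv)
      · have huS : u ∈ S := (Set.mem_insert_iff.mp hu).resolve_left hu2
        have hvS : v ∈ S := (Set.mem_insert_iff.mp hv).resolve_left hv2
        rw [ins_apply hu1 hu2, ins_apply hv1 hv2] at huv
        exact hf.injOn huS hvS huv
  · intro w hw
    rcases Set.mem_insert_iff.mp hw with rfl | hwS
    · exact ⟨a, Set.mem_insert_of_mem _ ha, ins_apply_a⟩
    · obtain ⟨c, hc, rfl⟩ := hf.surjOn hwS
      by_cases hca : c = a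
      · subst hca
        exact ⟨z, Set.mem_insert _ _, ins_apply_z hza⟩
      · exact ⟨c, Set.mem_insert_of_mem _ hc,
          ins_apply hca (fun hc2 => hz (hc2 ▸ hc))⟩

lemma iterate_agree (hmap : ∀ s ∈ S, f s ∈ S) (hag : ∀ s ∈ S, g s = f s)
    {u : α} (hu : u ∈ S) (n : ℕ) : g^[n] u = f^[n] u := by
  induction n with
  | zero => rfl
  | succ n ih =>
    rw [Function.iterate_succ_apply', Function.iterate_succ_apply', ih,
      hag _ (iterate_mem (fun s hs => hmap s hs) hu n)]

lemma ins_cyc (hmap : ∀ s ∈ S, f s ∈ S)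
    (hcyc : ∀ u ∈ S, ∀ v ∈ S, ∃ n, f^[n] u = v) (ha : a ∈ S) (hz : z ∉ S)
    (hg1 : g a = z) (hg2 : g z = f a) (hg3 : ∀ s ∈ S, s ≠ a → g s = f s) :
    ∀ u ∈ insert z S, ∀ v ∈ insert z S, ∃ n, g^[n] u = v := by
  have key : ∀ u ∈ S, ∀ n : ℕ, ∃ m, g^[m] u = f^[n] u := by
    intro u hu n
    induction n with
    | zero => exact ⟨0, rfl⟩
    | succ n ih =>
      obtain ⟨m, hm⟩ := ih
      by_cases hc : f^[n] u = a
      · refine ⟨m + 2, ?_⟩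
        rw [show m + 2 = (m + 1) + 1 from rfl, Function.iterate_succ_apply',
          Function.iterate_succ_apply', hm, hc, hg1, hg2, ← hc]
        exact (Function.iterate_succ_apply' f n u).symm
      · refine ⟨m + 1, ?_⟩
        rw [Function.iterate_succ_apply', hm,
          hg3 _ (iterate_mem (fun s hs => hmap s hs) hu n) hc]
        exact (Function.iterate_succ_apply' f n u).symm
  have reach_z : ∀ u ∈ S, ∃ m, g^[m] u = z := by
    intro u hu
    obtain ⟨n, hn⟩ := hcyc u hu a ha
    obtain ⟨m, hm⟩ := key u hu n
    exact ⟨m + 1, by rw [Function.iterate_succ_apply', hm, hn, hg1]⟩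
  intro u hu v hv
  rcases Set.mem_insert_iff.mp hu with rfl | huS
  · rcases Set.mem_insert_iff.mp hv with rfl | hvS
    · exact ⟨0, rfl⟩
    · obtain ⟨n, hn⟩ := hcyc (f a) (hmap a ha) v hvS
      obtain ⟨m, hm⟩ := key (f a) (hmap a ha) n
      refine ⟨m + 1, ?_⟩
      rw [Function.iterate_succ_apply, hg2, hm, hn]
  · rcases Set.mem_insert_iff.mp hv with rfl | hvS
    · exact reach_z u huS
    · obtain ⟨n, hn⟩ := hcyc u huS v hvS
      obtain ⟨m, hm⟩ := key u huS n
      exact ⟨m, by rw [hm, hn]⟩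

noncomputable def extFix (f : α → α) (z : α) : α → α := fun d => if d = z then z else f d

lemma extFix_apply_z : extFix f z z = z := by simp [extFix]

lemma extFix_apply (hdz : d ≠ z) : extFix f z d = f d := by simp [extFix, hdz]

lemma extFix_bijOn (hf : Set.BijOn f S S) (hz : z ∉ S) :
    Set.BijOn (extFix f z) (insert z S) (insert z S) := by
  refine ⟨?_, ?_, ?_⟩
  · intro d hd
    rcases Set.mem_insert_iff.mp hd with rfl | hdS
    · rw [extFix_apply_z]; exact Set.mem_insert _ _
    · have hdz : d ≠ z := fun hc => hz (hc ▸ hdS)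
      rw [extFix_apply hdz]
      exact Set.mem_insert_of_mem _ (hf.mapsTo hdS)
  · intro u hu v hv huv
    by_cases hu1 : u = z <;> by_cases hv1 : v = z
    · rw [hu1, hv1]
    · exfalso
      have hvS : v ∈ S := (Set.mem_insert_iff.mp hv).resolve_left hv1
      rw [hu1, extFix_apply_z, extFix_apply hv1] at huv
      exact hz (huv ▸ hf.mapsTo hvS)
    · exfalso
      have huS : u ∈ S := (Set.mem_insert_iff.mp hu).resolve_left hu1
      rw [hv1, extFix_apply_z, extFix_apply hu1] at huv
      exact hz (huv.symm ▸ hf.mapsTo huS)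
    · have huS : u ∈ S := (Set.mem_insert_iff.mp hu).resolve_left hu1
      have hvS : v ∈ S := (Set.mem_insert_iff.mp hv).resolve_left hv1
      rw [extFix_apply hu1, extFix_apply hv1] at huv
      exact hf.injOn huS hvS huv
  · intro w hw
    by_cases hwz : w = z
    · subst hwz
      exact ⟨w, Set.mem_insert _ _, extFix_apply_z⟩
    · have hwS : w ∈ S := (Set.mem_insert_iff.mp hw).resolve_left hwz
      obtain ⟨c, hc, rfl⟩ := hf.surjOn hwS
      have hcz : c ≠ z := fun hc2 => hz (hc2 ▸ hc)
      exact ⟨c, Set.mem_insert_of_mem _ hc, extFix_apply hcz⟩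

end Ins

end AltAux

section GraphAux

open AltAux

lemma SGraph.ext' {G₁ G₂ : SGraph} (hv : G₁.verts = G₂.verts) (he : G₁.edges = G₂.edges) :
    G₁ = G₂ := by
  cases G₁
  cases G₂
  simp only at hv he
  subst hv
  subst he
  rfl

/-- Adding an edge to a graph. -/
def addE (G : SGraph) (x y : ℕ) (hx : x ∈ G.verts) (hy : y ∈ G.verts) (hxy : x ≠ y) :
    SGraph where
  verts := G.verts
  edges := insert s(x, y) G.edges
  edge_sub := by
    intro e he v hv
    rcases Finset.mem_insert.mp he with h | h
    · subst h
      rcases Sym2.mem_iff.mp hv with rfl | rfl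
      · exact hx
      · exact hy
    · exact G.edge_sub e h v hv
  loopless := by
    intro e he
    rcases Finset.mem_insert.mp he with h | h
    · subst h
      simpa [Sym2.mk_isDiag_iff] using hxy
    · exact G.loopless e h

lemma plus_eq_addE (G : TGraph) : G.plus.G = addE G.G G.x G.y G.hx G.hy G.hxy := rfl

lemma mem_darts_iff {G : SGraph} {p : ℕ × ℕ} : p ∈ G.darts ↔ s(p.1, p.2) ∈ G.edges :=
  Iff.rfl

lemma darts_finite (G : SGraph) : G.darts.Finite := by
  refine Set.Finite.subset (Finset.finite_toSet (G.verts ×ˢ G.verts)) ?_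
  intro p hp
  have h1 : p.1 ∈ G.verts := G.edge_sub _ hp p.1 (Sym2.mem_mk_left _ _)
  have h2 : p.2 ∈ G.verts := G.edge_sub _ hp p.2 (Sym2.mem_mk_right _ _)
  simp only [Finset.coe_product, Set.mem_prod]
  exact ⟨h1, h2⟩

lemma rev_mem_darts {G : SGraph} {p : ℕ × ℕ} (h : p ∈ G.darts) : (p.2, p.1) ∈ G.darts := by
  simp only [SGraph.darts, Set.mem_setOf_eq] at h ⊢
  rwa [Sym2.eq_swap]

lemma faceMap_bijOn {G : SGraph} (R : Rot G) : Set.BijOn (faceMap R) G.darts G.darts := by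
  have hrev : Set.BijOn (fun p : ℕ × ℕ => (p.2, p.1)) G.darts G.darts := by
    refine ⟨fun p hp => rev_mem_darts hp, ?_, ?_⟩
    · intro p _ q _ h
      have h1 : p.2 = q.2 := congrArg Prod.fst h
      have h2 : p.1 = q.1 := congrArg Prod.snd h
      exact Prod.ext h2 h1
    · intro p hp
      exact ⟨(p.2, p.1), rev_mem_darts hp, rfl⟩
  exact R.bij.comp hrev

lemma faceCount_eq {G : SGraph} (R : Rot G) :
    faceCount R = (orbSet (faceMap R) G.darts).ncard + G.isolCount := rfl

lemma adj_symm {G : SGraph} {u v : ℕ} (h : G.Adj u v) : G.Adj v u := by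
  unfold SGraph.Adj at h ⊢
  rwa [Sym2.eq_swap]

lemma reach_symm {G : SGraph} {u v : ℕ} (h : G.Reach u v) : G.Reach v u :=
  @Std.Symm.symm _ _ (@Relation.ReflTransGen.stdSymm _ G.Adj ⟨fun _ _ hab => adj_symm hab⟩) _ _ h

lemma reach_mem_verts {G : SGraph} {u v : ℕ} (hu : u ∈ G.verts) (h : G.Reach u v) :
    v ∈ G.verts := by
  induction h with
  | refl => exact hu
  | tail _ hadj ih => exact G.edge_sub _ hadj _ (Sym2.mem_mk_right _ _)

lemma comp_eq_of_reach {G : SGraph} {v w : ℕ} (h : G.Reach v w) :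
    {u | G.Reach v u} = {u | G.Reach w u} := by
  ext u
  exact ⟨fun h2 => Relation.ReflTransGen.trans (reach_symm h) h2,
    fun h2 => Relation.ReflTransGen.trans h h2⟩

lemma orbit_reach {G : SGraph} (R : Rot G) {d : ℕ × ℕ} (hd : d ∈ G.darts) (n : ℕ) :
    G.Reach d.2 ((faceMap R)^[n] d).2 := by
  induction n with
  | zero => exact Relation.ReflTransGen.refl
  | succ n ih =>
    have hc : (faceMap R)^[n] d ∈ G.darts := iterate_mem (faceMap_bijOn R).mapsTo hd n
    have h1 : (faceMap R ((faceMap R)^[n] d)).1 = ((faceMap R)^[n] d).2 :=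
      R.fix _ (rev_mem_darts hc)
    have h2 : faceMap R ((faceMap R)^[n] d) ∈ G.darts := (faceMap_bijOn R).mapsTo hc
    rw [Function.iterate_succ_apply']
    refine Relation.ReflTransGen.trans ih ?_
    rw [← h1]
    exact Relation.ReflTransGen.single h2

end GraphAux

section CompIsol

open AltAux

variable {G : SGraph} {x y : ℕ} {hx : x ∈ G.verts} {hy : y ∈ G.verts} {hxy : x ≠ y}

lemma adj_addE_iff {u v : ℕ} :
    (addE G x y hx hy hxy).Adj u v ↔ G.Adj u v ∨ (u = x ∧ v = y) ∨ (u = y ∧ v = x) := by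
  unfold SGraph.Adj addE
  simp only [Finset.mem_insert]
  constructor
  · rintro (h | h)
    · rcases Sym2.eq_iff.mp h with ⟨rfl, rfl⟩ | ⟨rfl, rfl⟩
      · exact Or.inr (Or.inl ⟨rfl, rfl⟩)
      · exact Or.inr (Or.inr ⟨rfl, rfl⟩)
    · exact Or.inl h
  · rintro (h | ⟨rfl, rfl⟩ | ⟨rfl, rfl⟩)
    · exact Or.inr h
    · exact Or.inl rfl
    · exact Or.inl Sym2.eq_swap

lemma reach_addE_iff {u v : ℕ} :
    (addE G x y hx hy hxy).Reach u v ↔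
      G.Reach u v ∨ (G.Reach u x ∧ G.Reach y v) ∨ (G.Reach u y ∧ G.Reach x v) := by
  constructor
  · intro h
    induction h with
    | refl => exact Or.inl Relation.ReflTransGen.refl
    | tail hr hadj ih =>
      rcases adj_addE_iff.mp hadj with hA | ⟨rfl, rfl⟩ | ⟨rfl, rfl⟩
      · rcases ih with h1 | ⟨h1, h2⟩ | ⟨h1, h2⟩
        · exact Or.inl (Relation.ReflTransGen.tail h1 hA)
        · exact Or.inr (Or.inl ⟨h1, Relation.ReflTransGen.tail h2 hA⟩)
        · exact Or.inr (Or.inr ⟨h1, Relation.ReflTransGen.tail h2 hA⟩)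
      · rcases ih with h1 | ⟨h1, h2⟩ | ⟨h1, h2⟩
        · exact Or.inr (Or.inl ⟨h1, Relation.ReflTransGen.refl⟩)
        · exact Or.inr (Or.inl ⟨h1, Relation.ReflTransGen.refl⟩)
        · exact Or.inl h1
      · rcases ih with h1 | ⟨h1, h2⟩ | ⟨h1, h2⟩
        · exact Or.inr (Or.inr ⟨h1, Relation.ReflTransGen.refl⟩)
        · exact Or.inl h1
        · exact Or.inr (Or.inr ⟨h1, Relation.ReflTransGen.refl⟩)
  · have hmono : ∀ {a b : ℕ}, G.Reach a b → (addE G x y hx hy hxy).Reach a b := by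
      intro a b h
      exact Relation.ReflTransGen.mono (fun c d hcd => adj_addE_iff.mpr (Or.inl hcd)) _ _ h
    have hxy' : (addE G x y hx hy hxy).Reach x y :=
      Relation.ReflTransGen.single (adj_addE_iff.mpr (Or.inr (Or.inl ⟨rfl, rfl⟩)))
    rintro (h | ⟨h1, h2⟩ | ⟨h1, h2⟩)
    · exact hmono h
    · exact Relation.ReflTransGen.trans (hmono h1)
        (Relation.ReflTransGen.trans hxy' (hmono h2))
    · exact Relation.ReflTransGen.trans (hmono h1)
        (Relation.ReflTransGen.trans (reach_symm hxy') (hmono h2))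

lemma compCount_addE_of_reach (hr : G.Reach x y) :
    (addE G x y hx hy hxy).compCount = G.compCount := by
  have hRe : ∀ u v : ℕ, (addE G x y hx hy hxy).Reach u v ↔ G.Reach u v := by
    intro u v
    rw [reach_addE_iff]
    constructor
    · rintro (h | ⟨h1, h2⟩ | ⟨h1, h2⟩)
      · exact h
      · exact Relation.ReflTransGen.trans h1 (Relation.ReflTransGen.trans hr h2)
      · exact Relation.ReflTransGen.trans h1
          (Relation.ReflTransGen.trans (reach_symm hr) h2)
    · exact fun h => Or.inl h
  unfold SGraph.compCount
  congr 1
  ext S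
  constructor
  · rintro ⟨v, hv, rfl⟩
    exact ⟨v, hv, Set.ext fun u => by exact hRe v u⟩
  · rintro ⟨v, hv, rfl⟩
    exact ⟨v, hv, Set.ext fun u => by exact (hRe v u).symm⟩

lemma compCount_finite (G : SGraph) :
    {S : Set ℕ | ∃ v ∈ G.verts, S = {u | G.Reach v u}}.Finite := by
  refine Set.Finite.subset (Set.Finite.finite_subsets (G.verts.finite_toSet)) ?_
  rintro S ⟨v, hv, rfl⟩
  intro u hu
  exact reach_mem_verts hv hu

lemma compCount_addE_of_not_reach (hnr : ¬ G.Reach x y) :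
    G.compCount = (addE G x y hx hy hxy).compCount + 1 := by
  classical
  set G' := addE G x y hx hy hxy with hG'
  have hC'of : ∀ v : ℕ, G.Reach v x →
      {u | G'.Reach v u} = {u | G.Reach x u} ∪ {u | G.Reach y u} := by
    intro v hvx
    have hvy : ¬ G.Reach v y := fun hvy =>
      hnr (Relation.ReflTransGen.trans (reach_symm hvx) hvy)
    ext u
    simp only [Set.mem_setOf_eq, Set.mem_union]
    rw [hG', reach_addE_iff]
    constructor
    · rintro (h | ⟨h1, h2⟩ | ⟨h1, h2⟩)
      · exact Or.inl (Relation.ReflTransGen.trans (reach_symm hvx) h)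
      · exact Or.inr h2
      · exact absurd h1 hvy
    · rintro (h | h)
      · exact Or.inl (Relation.ReflTransGen.trans hvx h)
      · exact Or.inr (Or.inl ⟨hvx, h⟩)
  have hC'of' : ∀ v : ℕ, G.Reach v y →
      {u | G'.Reach v u} = {u | G.Reach x u} ∪ {u | G.Reach y u} := by
    intro v hvy
    have hvx : ¬ G.Reach v x := fun hvx =>
      hnr (Relation.ReflTransGen.trans (reach_symm hvx) hvy)
    ext u
    simp only [Set.mem_setOf_eq, Set.mem_union]
    rw [hG', reach_addE_iff]
    constructor
    · rintro (h | ⟨h1, h2⟩ | ⟨h1, h2⟩)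
      · exact Or.inr (Relation.ReflTransGen.trans (reach_symm hvy) h)
      · exact absurd h1 hvx
      · exact Or.inl h2
    · rintro (h | h)
      · exact Or.inr (Or.inr ⟨hvy, h⟩)
      · exact Or.inl (Relation.ReflTransGen.trans hvy h)
  have hC'none : ∀ v : ℕ, ¬ G.Reach v x → ¬ G.Reach v y →
      {u | G'.Reach v u} = {u | G.Reach v u} := by
    intro v hvx hvy
    ext u
    simp only [Set.mem_setOf_eq]
    rw [hG', reach_addE_iff]
    constructor
    · rintro (h | ⟨h1, h2⟩ | ⟨h1, h2⟩)
      · exact h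
      · exact absurd h1 hvx
      · exact absurd h1 hvy
    · exact fun h => Or.inl h
  set Cx : Set ℕ := {u | G.Reach x u} with hCx
  set Cy : Set ℕ := {u | G.Reach y u} with hCy
  set K : Set (Set ℕ) := {S | ∃ v ∈ G.verts, S = {u | G.Reach v u}} with hK
  set K' : Set (Set ℕ) := {S | ∃ v ∈ G'.verts, S = {u | G'.Reach v u}} with hK'
  have hxCx : x ∈ Cx := Relation.ReflTransGen.refl
  have hyCy : y ∈ Cy := Relation.ReflTransGen.refl
  have hCxCy : Cx ≠ Cy := by
    intro hc
    have h2 : x ∈ Cy := hc ▸ hxCx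
    exact hnr (reach_symm h2)
  have hMnot : ∀ w ∈ G.verts, Cx ∪ Cy = {u | G.Reach w u} → False := by
    intro w hw hc
    have h1 : x ∈ {u | G.Reach w u} := by rw [← hc]; exact Or.inl hxCx
    have h2 : y ∈ {u | G.Reach w u} := by rw [← hc]; exact Or.inr hyCy
    exact hnr (Relation.ReflTransGen.trans (reach_symm h1) h2)
  have hKset : K' = insert (Cx ∪ Cy) ((K \ {Cx}) \ {Cy}) := by
    ext S
    constructor
    · rintro ⟨v, hv, rfl⟩
      by_cases hvx : G.Reach v x
      · rw [hC'of v hvx]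
        exact Set.mem_insert _ _
      by_cases hvy : G.Reach v y
      · rw [hC'of' v hvy]
        exact Set.mem_insert _ _
      · rw [hC'none v hvx hvy]
        refine Set.mem_insert_of_mem _ ⟨⟨⟨v, hv, rfl⟩, ?_⟩, ?_⟩
        · simp only [Set.mem_singleton_iff]
          intro hc
          exact hvx (by have h2 : x ∈ {u | G.Reach v u} := by rw [hc]; exact hxCx
                        exact h2)
        · simp only [Set.mem_singleton_iff]
          intro hc
          exact hvy (by have h2 : y ∈ {u | G.Reach v u} := by rw [hc]; exact hyCy
                        exact h2)
    · intro hS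
      rcases Set.mem_insert_iff.mp hS with rfl | hS
      · exact ⟨x, hx, (hC'of x Relation.ReflTransGen.refl).symm⟩
      · obtain ⟨⟨⟨v, hv, rfl⟩, hne1⟩, hne2⟩ := hS
        have hvx : ¬ G.Reach v x := fun h =>
          hne1 (by simp only [Set.mem_singleton_iff]; exact comp_eq_of_reach h)
        have hvy : ¬ G.Reach v y := fun h =>
          hne2 (by simp only [Set.mem_singleton_iff]; exact comp_eq_of_reach h)
        exact ⟨v, hv, (hC'none v hvx hvy).symm⟩
  have hKfin : K.Finite := compCount_finite G
  have hCxK : Cx ∈ K := ⟨x, hx, rfl⟩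
  have hCyK : Cy ∈ K \ {Cx} := by
    refine ⟨⟨y, hy, rfl⟩, ?_⟩
    simp only [Set.mem_singleton_iff]
    exact fun hc => hCxCy hc.symm
  have hfin1 : (K \ {Cx}).Finite := hKfin.diff
  have hfin2 : ((K \ {Cx}) \ {Cy}).Finite := hfin1.diff
  have hMK : (Cx ∪ Cy) ∉ (K \ {Cx}) \ {Cy} := by
    rintro ⟨⟨⟨w, hw, hc⟩, -⟩, -⟩
    exact hMnot w hw hc
  have e0 : G.compCount = K.ncard := rfl
  have e0' : G'.compCount = K'.ncard := rfl
  rw [e0, e0', hKset, Set.ncard_insert_of_notMem hMK hfin2]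
  have e1 := Set.ncard_diff_singleton_add_one hCyK hfin1
  have e2 := Set.ncard_diff_singleton_add_one hCxK hKfin
  omega

lemma exists_dart_iff_edge : (∃ a ∈ G.darts, a.1 = x) ↔ ∃ e ∈ G.edges, x ∈ e := by
  constructor
  · rintro ⟨a, ha, rfl⟩
    exact ⟨s(a.1, a.2), ha, Sym2.mem_mk_left _ _⟩
  · rintro ⟨e, he, hxe⟩
    obtain ⟨w, rfl⟩ := Sym2.mem_iff_exists.mp hxe
    exact ⟨(x, w), he, rfl⟩

lemma isol_pred_addE {v : ℕ} :
    (∀ e ∈ (addE G x y hx hy hxy).edges, v ∉ e) ↔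
      ((∀ e ∈ G.edges, v ∉ e) ∧ v ≠ x ∧ v ≠ y) := by
  rw [show (addE G x y hx hy hxy).edges = insert s(x, y) G.edges from rfl,
    Finset.forall_mem_insert]
  constructor
  · rintro ⟨h1, h2⟩
    exact ⟨h2, fun hc => h1 (by rw [hc]; exact Sym2.mem_mk_left _ _),
      fun hc => h1 (by rw [hc]; exact Sym2.mem_mk_right _ _)⟩
  · rintro ⟨h2, hvx, hvy⟩
    refine ⟨fun hc => ?_, h2⟩
    rcases Sym2.mem_iff.mp hc with rfl | rfl
    · exact hvx rfl
    · exact hvy rfl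

lemma isolCount_addE_both (hxe : ∃ e ∈ G.edges, x ∈ e) (hye : ∃ e ∈ G.edges, y ∈ e) :
    (addE G x y hx hy hxy).isolCount = G.isolCount := by
  unfold SGraph.isolCount
  congr 1
  ext v
  simp only [Finset.mem_filter]
  constructor
  · rintro ⟨hv, hP⟩
    obtain ⟨hP', -, -⟩ := isol_pred_addE.mp hP
    exact ⟨hv, hP'⟩
  · rintro ⟨hv, hP⟩
    refine ⟨hv, isol_pred_addE.mpr ⟨hP, ?_, ?_⟩⟩
    · rintro rfl
      obtain ⟨e, he, hxe'⟩ := hxe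
      exact hP e he hxe'
    · rintro rfl
      obtain ⟨e, he, hye'⟩ := hye
      exact hP e he hye'

lemma isolCount_addE_left (hxe : ¬ ∃ e ∈ G.edges, x ∈ e) (hye : ∃ e ∈ G.edges, y ∈ e) :
    (addE G x y hx hy hxy).isolCount + 1 = G.isolCount := by
  have hfe : (addE G x y hx hy hxy).verts.filter
        (fun v => ∀ e ∈ (addE G x y hx hy hxy).edges, v ∉ e) =
      (G.verts.filter (fun v => ∀ e ∈ G.edges, v ∉ e)).erase x := by
    ext v
    simp only [Finset.mem_filter, Finset.mem_erase]
    constructor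
    · rintro ⟨hv, hP⟩
      obtain ⟨hP', hvx, -⟩ := isol_pred_addE.mp hP
      exact ⟨hvx, hv, hP'⟩
    · rintro ⟨hvx, hv, hP⟩
      refine ⟨hv, isol_pred_addE.mpr ⟨hP, hvx, ?_⟩⟩
      rintro rfl
      obtain ⟨e, he, hye'⟩ := hye
      exact hP e he hye'
  have hxmem : x ∈ G.verts.filter (fun v => ∀ e ∈ G.edges, v ∉ e) :=
    Finset.mem_filter.mpr ⟨hx, fun e he hxe' => hxe ⟨e, he, hxe'⟩⟩
  unfold SGraph.isolCount
  rw [hfe]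
  exact Finset.card_erase_add_one hxmem

lemma isolCount_addE_none (hxe : ¬ ∃ e ∈ G.edges, x ∈ e) (hye : ¬ ∃ e ∈ G.edges, y ∈ e) :
    (addE G x y hx hy hxy).isolCount + 2 = G.isolCount := by
  have hfe : (addE G x y hx hy hxy).verts.filter
        (fun v => ∀ e ∈ (addE G x y hx hy hxy).edges, v ∉ e) =
      ((G.verts.filter (fun v => ∀ e ∈ G.edges, v ∉ e)).erase x).erase y := by
    ext v
    simp only [Finset.mem_filter, Finset.mem_erase]
    constructor
    · rintro ⟨hv, hP⟩
      obtain ⟨hP', hvx, hvy⟩ := isol_pred_addE.mp hP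
      exact ⟨hvy, hvx, hv, hP'⟩
    · rintro ⟨hvy, hvx, hv, hP⟩
      exact ⟨hv, isol_pred_addE.mpr ⟨hP, hvx, hvy⟩⟩
  have hxmem : x ∈ G.verts.filter (fun v => ∀ e ∈ G.edges, v ∉ e) :=
    Finset.mem_filter.mpr ⟨hx, fun e he hxe' => hxe ⟨e, he, hxe'⟩⟩
  have hymem : y ∈ (G.verts.filter (fun v => ∀ e ∈ G.edges, v ∉ e)).erase x :=
    Finset.mem_erase.mpr ⟨fun hc => hxy hc.symm,
      Finset.mem_filter.mpr ⟨hy, fun e he hye' => hye ⟨e, he, hye'⟩⟩⟩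
  unfold SGraph.isolCount
  rw [hfe]
  have e1 := Finset.card_erase_add_one hymem
  have e2 := Finset.card_erase_add_one hxmem
  omega

lemma edges_card_addE (hE : s(x, y) ∉ G.edges) :
    (addE G x y hx hy hxy).edges.card = G.edges.card + 1 := by
  rw [show (addE G x y hx hy hxy).edges = insert s(x, y) G.edges from rfl,
    Finset.card_insert_of_notMem hE]

lemma darts_addE :
    (addE G x y hx hy hxy).darts = insert (x, y) (insert (y, x) G.darts) := by
  ext p
  obtain ⟨u, v⟩ := p
  simp only [SGraph.darts, Set.mem_setOf_eq, Set.mem_insert_iff,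
    show (addE G x y hx hy hxy).edges = insert s(x, y) G.edges from rfl,
    Finset.mem_insert]
  constructor
  · rintro (h | h)
    · rcases Sym2.eq_iff.mp h with ⟨rfl, rfl⟩ | ⟨rfl, rfl⟩
      · exact Or.inl rfl
      · exact Or.inr (Or.inl rfl)
    · exact Or.inr (Or.inr h)
  · rintro (h | h | h)
    · cases h
      exact Or.inl rfl
    · cases h
      exact Or.inl Sym2.eq_swap
    · exact Or.inr h

end CompIsol

section RotCons

open AltAux

variable {G : SGraph} {x y : ℕ} {hx : x ∈ G.verts} {hy : y ∈ G.verts} {hxy : x ≠ y}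

/-- The star of a vertex: the set of darts leaving it. -/
def star (G : SGraph) (w : ℕ) : Set (ℕ × ℕ) := {e | e ∈ G.darts ∧ e.1 = w}

lemma star_maps (R : Rot G) (w : ℕ) : ∀ s ∈ star G w, R.r s ∈ star G w := by
  rintro s ⟨hs, hsw⟩
  exact ⟨R.bij.mapsTo hs, by rw [R.fix s hs]; exact hsw⟩

lemma star_cyc (R : Rot G) (w : ℕ) :
    ∀ u ∈ star G w, ∀ v ∈ star G w, ∃ n, R.r^[n] u = v := by
  rintro u ⟨hu, huw⟩ v ⟨hv, hvw⟩
  exact R.cyc u hu v hv (huw.trans hvw.symm)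

lemma rot_addE_two (hE : s(x, y) ∉ G.edges) (R : Rot G) {a b : ℕ × ℕ}
    (ha : a ∈ G.darts) (hax : a.1 = x) (hb : b ∈ G.darts) (hby : b.1 = y) :
    ∃ R' : Rot (addE G x y hx hy hxy),
      faceMap R' (a.2, a.1) = (x, y) ∧
      faceMap R' (x, y) = faceMap R (b.2, b.1) ∧
      faceMap R' (b.2, b.1) = (y, x) ∧
      faceMap R' (y, x) = faceMap R (a.2, a.1) ∧
      (∀ e ∈ G.darts, e ≠ (a.2, a.1) → e ≠ (b.2, b.1) → faceMap R' e = faceMap R e) := by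
  classical
  have hz₁D : ((x, y) : ℕ × ℕ) ∉ G.darts := hE
  have hz₂D : ((y, x) : ℕ × ℕ) ∉ G.darts := by
    intro h
    rw [mem_darts_iff] at h
    rw [Sym2.eq_swap] at h
    exact hE h
  have hzz : ((x, y) : ℕ × ℕ) ≠ (y, x) := fun hc => hxy (congrArg Prod.fst hc)
  have hab : a ≠ b := fun hc => hxy (by rw [← hax, hc, hby])
  have haz₁ : a ≠ (x, y) := fun hc => hz₁D (hc ▸ ha)
  have haz₂ : a ≠ (y, x) := fun hc => hz₂D (hc ▸ ha)
  have hbz₁ : b ≠ (x, y) := fun hc => hz₁D (hc ▸ hb)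
  have hbz₂ : b ≠ (y, x) := fun hc => hz₂D (hc ▸ hb)
  set f₁ : ℕ × ℕ → ℕ × ℕ := ins R.r a (x, y) with hf₁
  set r' : ℕ × ℕ → ℕ × ℕ := ins f₁ b (y, x) with hr'
  have hv_a : r' a = (x, y) := by
    rw [hr', ins_apply hab haz₂, hf₁, ins_apply_a]
  have hv_z₁ : r' (x, y) = R.r a := by
    rw [hr', ins_apply (Ne.symm hbz₁) hzz, hf₁, ins_apply_z (Ne.symm haz₁)]
  have hv_b : r' b = (y, x) := by
    rw [hr', ins_apply_a]
  have hv_z₂ : r' (y, x) = R.r b := by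
    rw [hr', ins_apply_z (Ne.symm hbz₂), hf₁, ins_apply hab.symm hbz₁]
  have hv_other : ∀ d ∈ G.darts, d ≠ a → d ≠ b → r' d = R.r d := by
    intro d hd hda hdb
    have hdz₂ : d ≠ (y, x) := fun hc => hz₂D (hc ▸ hd)
    have hdz₁ : d ≠ (x, y) := fun hc => hz₁D (hc ▸ hd)
    rw [hr', ins_apply hdb hdz₂, hf₁, ins_apply hda hdz₁]
  have hD' : (addE G x y hx hy hxy).darts = insert (x, y) (insert (y, x) G.darts) :=
    darts_addE
  have hf₁bij : Set.BijOn f₁ (insert (x, y) G.darts) (insert (x, y) G.darts) :=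
    ins_bijOn R.bij ha hz₁D
  have hr'bij : Set.BijOn r' (insert (y, x) (insert (x, y) G.darts))
      (insert (y, x) (insert (x, y) G.darts)) :=
    ins_bijOn hf₁bij (Set.mem_insert_of_mem _ hb)
      (fun hc => (Set.mem_insert_iff.mp hc).elim (fun h => hzz h.symm) hz₂D)
  have hstarx : ∀ d ∈ (addE G x y hx hy hxy).darts, d.1 = x →
      d ∈ insert ((x, y) : ℕ × ℕ) (star G x) := by
    intro d hd hdx
    rw [hD'] at hd
    rcases Set.mem_insert_iff.mp hd with rfl | hd
    · exact Set.mem_insert _ _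
    rcases Set.mem_insert_iff.mp hd with rfl | hd
    · exact absurd hdx (fun hc => hxy hc.symm)
    · exact Set.mem_insert_of_mem _ ⟨hd, hdx⟩
  have hstary : ∀ d ∈ (addE G x y hx hy hxy).darts, d.1 = y →
      d ∈ insert ((y, x) : ℕ × ℕ) (star G y) := by
    intro d hd hdy
    rw [hD'] at hd
    rcases Set.mem_insert_iff.mp hd with rfl | hd
    · exact absurd hdy hxy
    rcases Set.mem_insert_iff.mp hd with rfl | hd
    · exact Set.mem_insert _ _
    · exact Set.mem_insert_of_mem _ ⟨hd, hdy⟩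
  have hcycx : ∀ u ∈ insert ((x, y) : ℕ × ℕ) (star G x),
      ∀ v ∈ insert ((x, y) : ℕ × ℕ) (star G x), ∃ n, r'^[n] u = v := by
    refine ins_cyc (star_maps R x) (star_cyc R x) ⟨ha, hax⟩
      (fun hc => hz₁D hc.1) hv_a hv_z₁ ?_
    rintro s ⟨hs, hsx⟩ hsa
    exact hv_other s hs hsa (fun hc => hxy (by rw [← hsx, hc, hby]))
  have hcycy : ∀ u ∈ insert ((y, x) : ℕ × ℕ) (star G y),
      ∀ v ∈ insert ((y, x) : ℕ × ℕ) (star G y), ∃ n, r'^[n] u = v := by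
    refine ins_cyc (star_maps R y) (star_cyc R y) ⟨hb, hby⟩
      (fun hc => hz₂D hc.1) hv_b hv_z₂ ?_
    rintro s ⟨hs, hsy⟩ hsb
    exact hv_other s hs (fun hc => hxy (by rw [← hax, ← hc, hsy])) hsb
  refine ⟨⟨r', ?_, ?_, ?_⟩, ?_, ?_, ?_, ?_, ?_⟩
  · rw [hD', Set.insert_comm]
    exact hr'bij
  · intro d hd
    rw [hD'] at hd
    rcases Set.mem_insert_iff.mp hd with rfl | hd
    · rw [hv_z₁, R.fix a ha, hax]
    rcases Set.mem_insert_iff.mp hd with rfl | hd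
    · rw [hv_z₂, R.fix b hb, hby]
    by_cases hda : d = a
    · subst hda; rw [hv_a, ← hax]
    by_cases hdb : d = b
    · subst hdb; rw [hv_b, ← hby]
    · rw [hv_other d hd hda hdb]
      exact R.fix d hd
  · intro d hd d' hd' hsame
    by_cases hwx : d.1 = x
    · exact hcycx d (hstarx d hd hwx) d' (hstarx d' hd' (hsame ▸ hwx)) 
    by_cases hwy : d.1 = y
    · exact hcycy d (hstary d hd hwy) d' (hstary d' hd' (hsame ▸ hwy))
    · -- d, d' in an untouched star
      rw [hD'] at hd hd'
      rcases Set.mem_insert_iff.mp hd with rfl | hd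
      · exact absurd rfl hwx
      rcases Set.mem_insert_iff.mp hd with rfl | hd
      · exact absurd rfl hwy
      rcases Set.mem_insert_iff.mp hd' with rfl | hd'
      · exact absurd hsame hwx
      rcases Set.mem_insert_iff.mp hd' with rfl | hd'
      · exact absurd hsame hwy
      obtain ⟨n, hn⟩ := R.cyc d hd d' hd' hsame
      refine ⟨n, ?_⟩
      rw [iterate_agree (star_maps R d.1) ?_ (⟨hd, rfl⟩ : d ∈ star G d.1) n, hn]
      rintro s ⟨hs, hsw⟩
      exact hv_other s hs (fun hc => hwx (by rw [← hsw, hc, hax]))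
        (fun hc => hwy (by rw [← hsw, hc, hby]))
  · show r' a = (x, y)
    exact hv_a
  · show r' (y, x) = R.r b
    exact hv_z₂
  · show r' b = (y, x)
    exact hv_b
  · show r' (x, y) = R.r a
    exact hv_z₁
  · intro e he hea heb
    show r' (e.2, e.1) = R.r (e.2, e.1)
    have h1 : (e.2, e.1) ∈ G.darts := rev_mem_darts he
    refine hv_other _ h1 ?_ ?_
    · intro hc
      exact hea (by rw [show e = ((e.2, e.1).2, (e.2, e.1).1) from rfl, hc])
    · intro hc
      exact heb (by rw [show e = ((e.2, e.1).2, (e.2, e.1).1) from rfl, hc])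

lemma rot_addE_one (hE : s(x, y) ∉ G.edges) (R : Rot G)
    (hnox : ¬ ∃ a ∈ G.darts, a.1 = x) {b : ℕ × ℕ}
    (hb : b ∈ G.darts) (hby : b.1 = y) :
    ∃ R' : Rot (addE G x y hx hy hxy),
      faceMap R' (b.2, b.1) = (y, x) ∧
      faceMap R' (y, x) = (x, y) ∧
      faceMap R' (x, y) = faceMap R (b.2, b.1) ∧
      (∀ e ∈ G.darts, e ≠ (b.2, b.1) → faceMap R' e = faceMap R e) := by
  classical
  have hz₁D : ((x, y) : ℕ × ℕ) ∉ G.darts := hE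
  have hz₂D : ((y, x) : ℕ × ℕ) ∉ G.darts := by
    intro h
    rw [mem_darts_iff] at h
    rw [Sym2.eq_swap] at h
    exact hE h
  have hzz : ((x, y) : ℕ × ℕ) ≠ (y, x) := fun hc => hxy (congrArg Prod.fst hc)
  have hbz₁ : b ≠ (x, y) := fun hc => hz₁D (hc ▸ hb)
  have hbz₂ : b ≠ (y, x) := fun hc => hz₂D (hc ▸ hb)
  set f₀ : ℕ × ℕ → ℕ × ℕ := extFix R.r (x, y) with hf₀
  set r' : ℕ × ℕ → ℕ × ℕ := ins f₀ b (y, x) with hr'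
  have hv_b : r' b = (y, x) := by rw [hr', ins_apply_a]
  have hv_z₂ : r' (y, x) = R.r b := by
    rw [hr', ins_apply_z (Ne.symm hbz₂), hf₀, extFix_apply hbz₁]
  have hv_z₁ : r' (x, y) = (x, y) := by
    rw [hr', ins_apply (Ne.symm hbz₁) hzz, hf₀, extFix_apply_z]
  have hv_other : ∀ d ∈ G.darts, d ≠ b → r' d = R.r d := by
    intro d hd hdb
    have hdz₂ : d ≠ (y, x) := fun hc => hz₂D (hc ▸ hd)
    have hdz₁ : d ≠ (x, y) := fun hc => hz₁D (hc ▸ hd)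
    rw [hr', ins_apply hdb hdz₂, hf₀, extFix_apply hdz₁]
  have hD' : (addE G x y hx hy hxy).darts = insert (x, y) (insert (y, x) G.darts) :=
    darts_addE
  have hf₀bij : Set.BijOn f₀ (insert (x, y) G.darts) (insert (x, y) G.darts) :=
    extFix_bijOn R.bij hz₁D
  have hr'bij : Set.BijOn r' (insert (y, x) (insert (x, y) G.darts))
      (insert (y, x) (insert (x, y) G.darts)) :=
    ins_bijOn hf₀bij (Set.mem_insert_of_mem _ hb)
      (fun hc => (Set.mem_insert_iff.mp hc).elim (fun h => hzz h.symm) hz₂D)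
  have hstary : ∀ d ∈ (addE G x y hx hy hxy).darts, d.1 = y →
      d ∈ insert ((y, x) : ℕ × ℕ) (star G y) := by
    intro d hd hdy
    rw [hD'] at hd
    rcases Set.mem_insert_iff.mp hd with rfl | hd
    · exact absurd hdy hxy
    rcases Set.mem_insert_iff.mp hd with rfl | hd
    · exact Set.mem_insert _ _
    · exact Set.mem_insert_of_mem _ ⟨hd, hdy⟩
  have hcycy : ∀ u ∈ insert ((y, x) : ℕ × ℕ) (star G y),
      ∀ v ∈ insert ((y, x) : ℕ × ℕ) (star G y), ∃ n, r'^[n] u = v := by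
    refine ins_cyc (star_maps R y) (star_cyc R y) ⟨hb, hby⟩
      (fun hc => hz₂D hc.1) hv_b hv_z₂ ?_
    rintro s ⟨hs, hsy⟩ hsb
    exact hv_other s hs hsb
  refine ⟨⟨r', ?_, ?_, ?_⟩, ?_, ?_, ?_, ?_⟩
  · rw [hD', Set.insert_comm]
    exact hr'bij
  · intro d hd
    rw [hD'] at hd
    rcases Set.mem_insert_iff.mp hd with rfl | hd
    · rw [hv_z₁]
    rcases Set.mem_insert_iff.mp hd with rfl | hd
    · rw [hv_z₂, R.fix b hb, hby]
    by_cases hdb : d = b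
    · subst hdb; rw [hv_b, ← hby]
    · rw [hv_other d hd hdb]
      exact R.fix d hd
  · intro d hd d' hd' hsame
    by_cases hwx : d.1 = x
    · -- the star of x is just {(x,y)}
      have hdx : d = (x, y) := by
        rw [hD'] at hd
        rcases Set.mem_insert_iff.mp hd with rfl | hd
        · rfl
        rcases Set.mem_insert_iff.mp hd with rfl | hd
        · exact absurd hwx (fun hc => hxy hc.symm)
        · exact (hnox ⟨d, hd, hwx⟩).elim
      have hdx' : d' = (x, y) := by
        rw [hD'] at hd'
        rcases Set.mem_insert_iff.mp hd' with rfl | hd'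
        · rfl
        rcases Set.mem_insert_iff.mp hd' with rfl | hd'
        · exact absurd (hsame ▸ hwx) (fun hc => hxy hc.symm)
        · exact (hnox ⟨d', hd', hsame ▸ hwx⟩).elim
      rw [hdx, hdx']
      exact ⟨0, rfl⟩
    by_cases hwy : d.1 = y
    · exact hcycy d (hstary d hd hwy) d' (hstary d' hd' (hsame ▸ hwy))
    · rw [hD'] at hd hd'
      rcases Set.mem_insert_iff.mp hd with rfl | hd
      · exact absurd rfl hwx
      rcases Set.mem_insert_iff.mp hd with rfl | hd
      · exact absurd rfl hwy
      rcases Set.mem_insert_iff.mp hd' with rfl | hd'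
      · exact absurd hsame hwx
      rcases Set.mem_insert_iff.mp hd' with rfl | hd'
      · exact absurd hsame hwy
      obtain ⟨n, hn⟩ := R.cyc d hd d' hd' hsame
      refine ⟨n, ?_⟩
      rw [iterate_agree (star_maps R d.1) ?_ (⟨hd, rfl⟩ : d ∈ star G d.1) n, hn]
      rintro s ⟨hs, hsw⟩
      exact hv_other s hs (fun hc => hwy (by rw [← hsw, hc, hby]))
  · show r' b = (y, x)
    exact hv_b
  · show r' (x, y) = (x, y)
    exact hv_z₁
  · show r' (y, x) = R.r b
    exact hv_z₂
  · intro e he heb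
    show r' (e.2, e.1) = R.r (e.2, e.1)
    have h1 : (e.2, e.1) ∈ G.darts := rev_mem_darts he
    refine hv_other _ h1 ?_
    intro hc
    exact heb (by rw [show e = ((e.2, e.1).2, (e.2, e.1).1) from rfl, hc])

lemma rot_addE_zero (hE : s(x, y) ∉ G.edges) (R : Rot G)
    (hnox : ¬ ∃ a ∈ G.darts, a.1 = x) (hnoy : ¬ ∃ a ∈ G.darts, a.1 = y) :
    ∃ R' : Rot (addE G x y hx hy hxy),
      faceMap R' (x, y) = (y, x) ∧
      faceMap R' (y, x) = (x, y) ∧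
      (∀ e ∈ G.darts, faceMap R' e = faceMap R e) := by
  classical
  have hz₁D : ((x, y) : ℕ × ℕ) ∉ G.darts := hE
  have hz₂D : ((y, x) : ℕ × ℕ) ∉ G.darts := by
    intro h
    rw [mem_darts_iff] at h
    rw [Sym2.eq_swap] at h
    exact hE h
  have hzz : ((x, y) : ℕ × ℕ) ≠ (y, x) := fun hc => hxy (congrArg Prod.fst hc)
  set r' : ℕ × ℕ → ℕ × ℕ := extFix (extFix R.r (x, y)) (y, x) with hr'
  have hv_z₁ : r' (x, y) = (x, y) := by
    rw [hr', extFix_apply hzz, extFix_apply_z]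
  have hv_z₂ : r' (y, x) = (y, x) := by
    rw [hr', extFix_apply_z]
  have hv_other : ∀ d ∈ G.darts, r' d = R.r d := by
    intro d hd
    have hdz₂ : d ≠ (y, x) := fun hc => hz₂D (hc ▸ hd)
    have hdz₁ : d ≠ (x, y) := fun hc => hz₁D (hc ▸ hd)
    rw [hr', extFix_apply hdz₂, extFix_apply hdz₁]
  have hD' : (addE G x y hx hy hxy).darts = insert (x, y) (insert (y, x) G.darts) :=
    darts_addE
  have hr'bij : Set.BijOn r' (insert (y, x) (insert (x, y) G.darts))
      (insert (y, x) (insert (x, y) G.darts)) :=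
    extFix_bijOn (extFix_bijOn R.bij hz₁D)
      (fun hc => (Set.mem_insert_iff.mp hc).elim (fun h => hzz h.symm) hz₂D)
  refine ⟨⟨r', ?_, ?_, ?_⟩, ?_, ?_, ?_⟩
  · rw [hD', Set.insert_comm]
    exact hr'bij
  · intro d hd
    rw [hD'] at hd
    rcases Set.mem_insert_iff.mp hd with rfl | hd
    · rw [hv_z₁]
    rcases Set.mem_insert_iff.mp hd with rfl | hd
    · rw [hv_z₂]
    · rw [hv_other d hd]
      exact R.fix d hd
  · intro d hd d' hd' hsame
    rw [hD'] at hd hd'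
    have hclass : ∀ c ∈ insert ((x, y) : ℕ × ℕ) (insert ((y, x) : ℕ × ℕ) G.darts),
        c = (x, y) ∨ c = (y, x) ∨ (c ∈ G.darts ∧ c.1 ≠ x ∧ c.1 ≠ y) := by
      intro c hc
      rcases Set.mem_insert_iff.mp hc with rfl | hc
      · exact Or.inl rfl
      rcases Set.mem_insert_iff.mp hc with rfl | hc
      · exact Or.inr (Or.inl rfl)
      · exact Or.inr (Or.inr ⟨hc, fun h => hnox ⟨c, hc, h⟩, fun h => hnoy ⟨c, hc, h⟩⟩)
    rcases hclass d hd with rfl | rfl | ⟨hdD, hdx, hdy⟩ <;>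
      rcases hclass d' hd' with rfl | rfl | ⟨hdD', hdx', hdy'⟩
    · exact ⟨0, rfl⟩
    · exact absurd hsame hxy
    · exact absurd hsame.symm hdx'
    · exact absurd hsame (fun hc => hxy hc.symm)
    · exact ⟨0, rfl⟩
    · exact absurd hsame.symm hdy'
    · exact absurd hsame hdx
    · exact absurd hsame hdy
    · obtain ⟨n, hn⟩ := R.cyc d hdD d' hdD' hsame
      refine ⟨n, ?_⟩
      rw [iterate_agree (star_maps R d.1) ?_ (⟨hdD, rfl⟩ : d ∈ star G d.1) n, hn]
      rintro s ⟨hs, hsw⟩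
      exact hv_other s hs
  · show r' (y, x) = (y, x)
    exact hv_z₂
  · show r' (x, y) = (x, y)
    exact hv_z₁
  · intro e he
    show r' (e.2, e.1) = R.r (e.2, e.1)
    exact hv_other _ (rev_mem_darts he)

end RotCons

section EulerAdd

open AltAux

variable {G : SGraph} {x y : ℕ} {hx : x ∈ G.verts} {hy : y ∈ G.verts} {hxy : x ≠ y}

lemma no_dart_not_reach (hnox : ¬ ∃ a ∈ G.darts, a.1 = x) (hxy' : x ≠ y) :
    ¬ G.Reach x y := by
  intro h
  rcases Relation.ReflTransGen.cases_head h with h1 | ⟨c, hadj, -⟩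
  · exact hxy' h1
  · exact hnox ⟨(x, c), hadj, rfl⟩

lemma euler_addE_two (hE : s(x, y) ∉ G.edges) (R : Rot G)
    (hdx : ∃ a ∈ G.darts, a.1 = x) (hdy : ∃ b ∈ G.darts, b.1 = y) :
    ∃ R' : Rot (addE G x y hx hy hxy),
      eulerVal (addE G x y hx hy hxy) R' = eulerVal G R ∨
      eulerVal (addE G x y hx hy hxy) R' = eulerVal G R + 2 := by
  classical
  obtain ⟨a, ha, hax⟩ := hdx
  obtain ⟨b, hb, hby⟩ := hdy
  obtain ⟨R', f1, f2, f3, f4, f5⟩ := rot_addE_two (hx := hx) (hy := hy) (hxy := hxy) hE R ha hax hb hby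
  have hφid : faceMap R = faceMap R := rfl
  set p : ℕ × ℕ := (a.2, a.1) with hp
  set q : ℕ × ℕ := (b.2, b.1) with hq
  have hpD : p ∈ G.darts := rev_mem_darts ha
  have hqD : q ∈ G.darts := rev_mem_darts hb
  have hDfin := darts_finite G
  have hbijφ := faceMap_bijOn R
  have hz₁D : ((x, y) : ℕ × ℕ) ∉ G.darts := hE
  have hz₂D : ((y, x) : ℕ × ℕ) ∉ G.darts := by
    intro h
    rw [mem_darts_iff] at h
    rw [Sym2.eq_swap] at h
    exact hE h
  have hzz : ((x, y) : ℕ × ℕ) ≠ (y, x) := fun hc => hxy (congrArg Prod.fst hc)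
  have hpq : p ≠ q := by
    intro hc
    have h2 : a.1 = b.1 := congrArg Prod.snd hc
    rw [hax, hby] at h2
    exact hxy h2
  have h4v : (addE G x y hx hy hxy).verts.card = G.verts.card := rfl
  have hedge := edges_card_addE (hx := hx) (hy := hy) (hxy := hxy) hE
  have hisol : (addE G x y hx hy hxy).isolCount = G.isolCount :=
    isolCount_addE_both (exists_dart_iff_edge.mp ⟨a, ha, hax⟩)
      (exists_dart_iff_edge.mp ⟨b, hb, hby⟩)
  refine ⟨R', ?_⟩
  by_cases horb : q ∈ orb (faceMap R) p
  · -- the new edge splits a face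
    left
    obtain ⟨n, hn⟩ := horb
    have hTpos : 0 < Function.minimalPeriod (faceMap R) p := by
      obtain ⟨T, hT0, hTd⟩ := periodic_of_mem hDfin hbijφ hpD
      exact Function.IsPeriodicPt.minimalPeriod_pos hT0 hTd
    have hqm : (faceMap R)^[n % Function.minimalPeriod (faceMap R) p] p = q := by
      rw [Function.iterate_mod_minimalPeriod_eq, hn]
    have hm0 : 0 < n % Function.minimalPeriod (faceMap R) p := by
      rcases Nat.eq_zero_or_pos (n % Function.minimalPeriod (faceMap R) p) with h0 | h
      · rw [h0, Function.iterate_zero_apply] at hqm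
        exact absurd hqm hpq
      · exact h
    have hmT : n % Function.minimalPeriod (faceMap R) p < Function.minimalPeriod (faceMap R) p :=
      Nat.mod_lt _ hTpos
    have horbcount := surgery_split hDfin hbijφ hz₁D hz₂D hzz hpD hqD f1 f2 f3 f4 f5
      hm0 hmT hqm
    have hreach : G.Reach x y := by
      have h2 := orbit_reach R hpD n
      rw [hn] at h2
      have h3 : G.Reach a.1 b.1 := h2
      rw [hax, hby] at h3
      exact h3
    have hcomp : (addE G x y hx hy hxy).compCount = G.compCount :=
      compCount_addE_of_reach hreach
    have hfr : faceCount R = (orbSet (faceMap R) G.darts).ncard + G.isolCount :=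
      faceCount_eq R
    have hfr' : faceCount R' =
        (orbSet (faceMap R') (insert (x, y) (insert (y, x) G.darts))).ncard +
          (addE G x y hx hy hxy).isolCount := by
      rw [faceCount_eq, darts_addE]
    have hface : faceCount R' = faceCount R + 1 := by
      omega
    unfold eulerVal
    rw [hcomp, hedge, hface, h4v]
    push_cast
    ring
  · -- the new edge merges two faces
    have horbcount := surgery_merge hDfin hbijφ hz₁D hz₂D hzz hpD hqD f1 f2 f3 f4 f5 horb
    have hfr : faceCount R = (orbSet (faceMap R) G.darts).ncard + G.isolCount :=
      faceCount_eq R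
    have hfr' : faceCount R' =
        (orbSet (faceMap R') (insert (x, y) (insert (y, x) G.darts))).ncard +
          (addE G x y hx hy hxy).isolCount := by
      rw [faceCount_eq, darts_addE]
    have hface : faceCount R = faceCount R' + 1 := by
      omega
    by_cases hreach : G.Reach x y
    · right
      have hcomp : (addE G x y hx hy hxy).compCount = G.compCount :=
        compCount_addE_of_reach hreach
      unfold eulerVal
      rw [hcomp, hedge, h4v]
      omega
    · left
      have hcomp : G.compCount = (addE G x y hx hy hxy).compCount + 1 :=
        compCount_addE_of_not_reach hreach
      unfold eulerVal
      rw [hedge, h4v]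
      omega

lemma euler_addE_one (hE : s(x, y) ∉ G.edges) (R : Rot G)
    (hnox : ¬ ∃ a ∈ G.darts, a.1 = x) (hdy : ∃ b ∈ G.darts, b.1 = y) :
    ∃ R' : Rot (addE G x y hx hy hxy),
      eulerVal (addE G x y hx hy hxy) R' = eulerVal G R := by
  classical
  obtain ⟨b, hb, hby⟩ := hdy
  obtain ⟨R', f1, f2, f3, f4⟩ := rot_addE_one (hx := hx) (hy := hy) (hxy := hxy) hE R hnox hb hby
  set q : ℕ × ℕ := (b.2, b.1) with hq
  have hqD : q ∈ G.darts := rev_mem_darts hb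
  have hDfin := darts_finite G
  have hbijφ := faceMap_bijOn R
  have hz₁D : ((x, y) : ℕ × ℕ) ∉ G.darts := hE
  have hz₂D : ((y, x) : ℕ × ℕ) ∉ G.darts := by
    intro h
    rw [mem_darts_iff] at h
    rw [Sym2.eq_swap] at h
    exact hE h
  have hzz : ((x, y) : ℕ × ℕ) ≠ (y, x) := fun hc => hxy (congrArg Prod.fst hc)
  have horbcount := surgery_one hDfin hbijφ hz₁D hz₂D hzz hqD f3 f1 f2 f4
  have h4v : (addE G x y hx hy hxy).verts.card = G.verts.card := rfl
  have hedge := edges_card_addE (hx := hx) (hy := hy) (hxy := hxy) hE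
  have hisol : (addE G x y hx hy hxy).isolCount + 1 = G.isolCount :=
    isolCount_addE_left (fun h => hnox (exists_dart_iff_edge.mpr h))
      (exists_dart_iff_edge.mp ⟨b, hb, hby⟩)
  have hcomp : G.compCount = (addE G x y hx hy hxy).compCount + 1 :=
    compCount_addE_of_not_reach (no_dart_not_reach hnox hxy)
  have hface : faceCount R' + 1 = faceCount R := by
    rw [faceCount_eq, faceCount_eq, darts_addE, horbcount]
    omega
  refine ⟨R', ?_⟩
  unfold eulerVal
  rw [hedge, h4v]
  omega

lemma euler_addE_zero (hE : s(x, y) ∉ G.edges) (R : Rot G)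
    (hnox : ¬ ∃ a ∈ G.darts, a.1 = x) (hnoy : ¬ ∃ b ∈ G.darts, b.1 = y) :
    ∃ R' : Rot (addE G x y hx hy hxy),
      eulerVal (addE G x y hx hy hxy) R' = eulerVal G R := by
  classical
  obtain ⟨R', f1, f2, f3⟩ := rot_addE_zero (hx := hx) (hy := hy) (hxy := hxy) hE R hnox hnoy
  have hDfin := darts_finite G
  have hbijφ := faceMap_bijOn R
  have hz₁D : ((x, y) : ℕ × ℕ) ∉ G.darts := hE
  have hz₂D : ((y, x) : ℕ × ℕ) ∉ G.darts := by
    intro h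
    rw [mem_darts_iff] at h
    rw [Sym2.eq_swap] at h
    exact hE h
  have hzz : ((x, y) : ℕ × ℕ) ≠ (y, x) := fun hc => hxy (congrArg Prod.fst hc)
  have horbcount := surgery_two hDfin hbijφ hz₁D hz₂D hzz f1 f2 f3
  have h4v : (addE G x y hx hy hxy).verts.card = G.verts.card := rfl
  have hedge := edges_card_addE (hx := hx) (hy := hy) (hxy := hxy) hE
  have hisol : (addE G x y hx hy hxy).isolCount + 2 = G.isolCount :=
    isolCount_addE_none (fun h => hnox (exists_dart_iff_edge.mpr h))
      (fun h => hnoy (exists_dart_iff_edge.mpr h))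
  have hcomp : G.compCount = (addE G x y hx hy hxy).compCount + 1 :=
    compCount_addE_of_not_reach (no_dart_not_reach hnox hxy)
  have hface : faceCount R' = faceCount R - 1 ∧ 1 ≤ faceCount R := by
    constructor
    · rw [faceCount_eq, faceCount_eq, darts_addE, horbcount]
      omega
    · rw [faceCount_eq]
      omega
  have hface' : faceCount R' + 1 = faceCount R := by
    rw [faceCount_eq, faceCount_eq, darts_addE, horbcount]
    omega
  refine ⟨R', ?_⟩
  unfold eulerVal
  rw [hedge, h4v]
  omega

lemma euler_addE (hE : s(x, y) ∉ G.edges) (R : Rot G) :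
    ∃ R' : Rot (addE G x y hx hy hxy),
      eulerVal (addE G x y hx hy hxy) R' = eulerVal G R ∨
      eulerVal (addE G x y hx hy hxy) R' = eulerVal G R + 2 := by
  classical
  by_cases hdx : ∃ a ∈ G.darts, a.1 = x <;> by_cases hdy : ∃ b ∈ G.darts, b.1 = y
  · exact euler_addE_two hE R hdx hdy
  · -- y isolated, x not: use symmetry
    have hsymm : addE G x y hx hy hxy = addE G y x hy hx (Ne.symm hxy) :=
      SGraph.ext' rfl (by rw [show (addE G x y hx hy hxy).edges = insert s(x,y) G.edges from rfl,
        show (addE G y x hy hx (Ne.symm hxy)).edges = insert s(y,x) G.edges from rfl,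
        Sym2.eq_swap])
    rw [hsymm]
    have hE' : s(y, x) ∉ G.edges := by rwa [Sym2.eq_swap]
    obtain ⟨R', hR'⟩ := euler_addE_one (hx := hy) (hy := hx) (hxy := Ne.symm hxy) hE' R hdy hdx
    exact ⟨R', Or.inl hR'⟩
  · obtain ⟨R', hR'⟩ := euler_addE_one hE R hdx hdy
    exact ⟨R', Or.inl hR'⟩
  · obtain ⟨R', hR'⟩ := euler_addE_zero hE R hdx hdy
    exact ⟨R', Or.inl hR'⟩

end EulerAdd

section GenusAttained

open AltAux

lemma darts_empty {G : SGraph} (h : G.edges = ∅) : G.darts = ∅ := by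
  ext p
  simp [SGraph.darts, h]

noncomputable def rotEmpty (G : SGraph) (h : G.edges = ∅) : Rot G where
  r := id
  bij := by
    rw [darts_empty h]
    exact ⟨fun d hd => hd, fun u _ v _ huv => huv, fun w hw => absurd hw (Set.notMem_empty w)⟩
  fix := by
    intro d hd
    rw [darts_empty h] at hd
    exact absurd hd (Set.notMem_empty d)
  cyc := by
    intro d hd
    rw [darts_empty h] at hd
    exact absurd hd (Set.notMem_empty d)

lemma euler_empty {G : SGraph} (h : G.edges = ∅) (R : Rot G) : eulerVal G R = 0 := by
  have hadj : ∀ u v : ℕ, ¬ G.Adj u v := by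
    intro u v hc
    rw [SGraph.Adj, h] at hc
    exact absurd hc (Finset.notMem_empty _)
  have hreach : ∀ v u : ℕ, G.Reach v u ↔ u = v := by
    intro v u
    exact Relation.reflTransGen_iff_eq (fun b hb => hadj v b hb)
  have hcomp : G.compCount = G.verts.card := by
    unfold SGraph.compCount
    have hset : {S : Set ℕ | ∃ v ∈ G.verts, S = {u | G.Reach v u}} =
        (fun v => ({v} : Set ℕ)) '' ↑G.verts := by
      ext S
      constructor
      · rintro ⟨v, hv, rfl⟩
        refine ⟨v, hv, ?_⟩
        ext u
        simp [hreach v u, eq_comm]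
      · rintro ⟨v, hv, rfl⟩
        refine ⟨v, hv, ?_⟩
        ext u
        simp [hreach v u, eq_comm]
    rw [hset, Set.ncard_image_of_injective _ Set.singleton_injective, Set.ncard_coe_finset]
  have hdarts := darts_empty h
  have hface : faceCount R = G.verts.card := by
    rw [faceCount_eq, hdarts]
    have h1 : orbSet (faceMap R) (∅ : Set (ℕ × ℕ)) = ∅ := by
      ext S
      simp [orbSet]
    rw [h1]
    have h2 : G.isolCount = G.verts.card := by
      unfold SGraph.isolCount
      rw [Finset.filter_true_of_mem]
      intro v _ e he
      rw [h] at he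
      exact absurd he (Finset.notMem_empty _)
    simp [h2]
  have hedge : G.edges.card = 0 := by rw [h]; rfl
  unfold eulerVal
  rw [hcomp, hface, hedge]
  push_cast
  ring

lemma exists_even_euler_aux : ∀ N : ℕ, ∀ G : SGraph, G.edges.card = N →
    ∃ (R : Rot G) (k : ℕ), 2 * (k : ℤ) = eulerVal G R := by
  intro N
  induction N using Nat.strong_induction_on with
  | _ N ih =>
    intro G hN
    by_cases h0 : G.edges = ∅
    · exact ⟨rotEmpty G h0, 0, by rw [euler_empty h0]; simp⟩
    · obtain ⟨e, he⟩ := Finset.nonempty_of_ne_empty h0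
      obtain ⟨a, b, rfl⟩ : ∃ a b, e = s(a, b) := by
        induction e using Sym2.ind with
        | _ a b => exact ⟨a, b, rfl⟩
      have ha : a ∈ G.verts := G.edge_sub _ he a (Sym2.mem_mk_left _ _)
      have hb : b ∈ G.verts := G.edge_sub _ he b (Sym2.mem_mk_right _ _)
      have hne : a ≠ b := by
        intro hc
        exact G.loopless _ he (by rw [hc]; exact Sym2.mk_isDiag_iff.mpr rfl)
      have hcard : (G.del a b).edges.card < N := by
        have h1 : (G.del a b).edges = G.edges.erase s(a, b) := rfl
        rw [h1, Finset.card_erase_of_mem he]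
        have h2 : 0 < G.edges.card := Finset.card_pos.mpr ⟨_, he⟩
        omega
      obtain ⟨R₀, k₀, hk₀⟩ := ih _ hcard (G.del a b) rfl
      have hE₀ : s(a, b) ∉ (G.del a b).edges := Finset.notMem_erase _ _
      have hva : a ∈ (G.del a b).verts := ha
      have hvb : b ∈ (G.del a b).verts := hb
      obtain ⟨R', hR'⟩ := euler_addE (hx := hva) (hy := hvb) (hxy := hne) hE₀ R₀
      have heq : addE (G.del a b) a b hva hvb hne = G :=
        SGraph.ext' rfl (Finset.insert_erase he)
      rw [← heq]
      rcases hR' with h1 | h1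
      · exact ⟨R', k₀, by rw [h1]; exact hk₀⟩
      · refine ⟨R', k₀ + 1, ?_⟩
        rw [h1]
        push_cast
        omega

lemma exists_even_euler (G : SGraph) :
    ∃ (R : Rot G) (k : ℕ), 2 * (k : ℤ) = eulerVal G R :=
  exists_even_euler_aux G.edges.card G rfl

lemma genus_attained (G : SGraph) : ∃ R : Rot G, 2 * (G.genus : ℤ) = eulerVal G R := by
  obtain ⟨R, k, hk⟩ := exists_even_euler G
  have hne : {k : ℕ | ∃ R : Rot G, 2 * (k : ℤ) = eulerVal G R}.Nonempty := ⟨k, R, hk⟩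
  exact Nat.sInf_mem hne

lemma genus_le {G : SGraph} {k : ℕ} (h : ∃ R : Rot G, 2 * (k : ℤ) = eulerVal G R) :
    G.genus ≤ k :=
  Nat.sInf_le h

end GenusAttained

section AltInsert

open AltAux

variable {G : SGraph} {x y : ℕ} {hx : x ∈ G.verts} {hy : y ∈ G.verts} {hxy : x ≠ y}

lemma insert_edge_alt (hE : s(x, y) ∉ G.edges) (R : Rot G)
    (halt : ∃ d ∈ G.darts, d.1 = x ∧ ∃ i j k : ℕ, 0 < i ∧ i < j ∧ j < k ∧
      k < Function.minimalPeriod (faceMap R) d ∧ ((faceMap R)^[i] d).1 = y ∧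
      ((faceMap R)^[j] d).1 = x ∧ ((faceMap R)^[k] d).1 = y) :
    ∃ R' : Rot (addE G x y hx hy hxy),
      eulerVal (addE G x y hx hy hxy) R' = eulerVal G R ∧
      ∃ d' ∈ (addE G x y hx hy hxy).darts, d'.1 = x ∧ ∃ i' j' k' : ℕ,
        0 < i' ∧ i' < j' ∧ j' < k' ∧ k' < Function.minimalPeriod (faceMap R') d' ∧
        ((faceMap R')^[i'] d').1 = y ∧ ((faceMap R')^[j'] d').1 = x ∧
        ((faceMap R')^[k'] d').1 = y := by
  classical
  obtain ⟨d, hd, hdx, i, j, k, hi, hij, hjk, hkT, hiy, hjx, hky⟩ := halt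
  have hbijφ := faceMap_bijOn R
  have hDfin := darts_finite G
  have hz₁D : ((x, y) : ℕ × ℕ) ∉ G.darts := hE
  have hz₂D : ((y, x) : ℕ × ℕ) ∉ G.darts := by
    intro hmem
    rw [mem_darts_iff] at hmem
    rw [Sym2.eq_swap] at hmem
    exact hE hmem
  have hzz : ((x, y) : ℕ × ℕ) ≠ (y, x) := fun hc => hxy (congrArg Prod.fst hc)
  set T := Function.minimalPeriod (faceMap R) d with hT
  have hTpos : 0 < T := by omega
  have hTd : (faceMap R)^[T] d = d := Function.iterate_minimalPeriod
  have hdper : d ∈ Function.periodicPts (faceMap R) := ⟨T, hTpos, hTd⟩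
  set p := (faceMap R)^[T - 1] d with hpdef
  set q := (faceMap R)^[i - 1] d with hqdef
  have hpD : p ∈ G.darts := iterate_mem hbijφ.mapsTo hd _
  have hqD : q ∈ G.darts := iterate_mem hbijφ.mapsTo hd _
  have hφp : faceMap R p = d := by
    have h1 := Function.iterate_succ_apply' (faceMap R) (T - 1) d
    rw [hpdef, ← h1, show (T - 1).succ = T by omega, hTd]
  have hφq : faceMap R q = (faceMap R)^[i] d := by
    have h1 := Function.iterate_succ_apply' (faceMap R) (i - 1) d
    rw [hqdef, ← h1, show (i - 1).succ = i by omega]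
  have hp2 : p.2 = x := by
    have h1 : (faceMap R p).1 = p.2 := R.fix _ (rev_mem_darts hpD)
    rw [hφp] at h1
    exact h1.symm.trans hdx
  have hq2 : q.2 = y := by
    have h1 : (faceMap R q).1 = q.2 := R.fix _ (rev_mem_darts hqD)
    rw [hφq] at h1
    exact h1.symm.trans hiy
  obtain ⟨R', f1, f2, f3, f4, f5⟩ := rot_addE_two (hx := hx) (hy := hy) (hxy := hxy)
    hE R (rev_mem_darts hpD) hp2 (rev_mem_darts hqD) hq2
  have f1' : faceMap R' p = (x, y) := f1
  have f2' : faceMap R' (x, y) = faceMap R q := f2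
  have f3' : faceMap R' q = (y, x) := f3
  have f4' : faceMap R' (y, x) = faceMap R p := f4
  have f5' : ∀ e ∈ G.darts, e ≠ p → e ≠ q → faceMap R' e = faceMap R e := f5
  -- the minimal period of p equals T
  have hTp : Function.minimalPeriod (faceMap R) p = T := by
    rw [hpdef]
    exact Function.minimalPeriod_apply_iterate hdper (T - 1)
  have hqm : (faceMap R)^[i] p = q := by
    rw [hpdef, ← Function.iterate_add_apply, show i + (T - 1) = (i - 1) + T by omega,
      Function.iterate_add_apply, hTd, ← hqdef]
  have hmT : i < Function.minimalPeriod (faceMap R) p := by rw [hTp]; omega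
  have horbcount := surgery_split hDfin hbijφ hz₁D hz₂D hzz hpD hqD f1' f2' f3' f4' f5'
    hi hmT hqm
  -- Euler value is unchanged
  have hreach : G.Reach x y := by
    have h2 := orbit_reach R hpD i
    rw [hqm] at h2
    rw [hp2, hq2] at h2
    exact h2
  have hcomp : (addE G x y hx hy hxy).compCount = G.compCount :=
    compCount_addE_of_reach hreach
  have hisol : (addE G x y hx hy hxy).isolCount = G.isolCount :=
    isolCount_addE_both
      (exists_dart_iff_edge.mp ⟨(p.2, p.1), rev_mem_darts hpD, hp2⟩)
      (exists_dart_iff_edge.mp ⟨(q.2, q.1), rev_mem_darts hqD, hq2⟩)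
  have hedge := edges_card_addE (hx := hx) (hy := hy) (hxy := hxy) hE
  have h4v : (addE G x y hx hy hxy).verts.card = G.verts.card := rfl
  have hfr : faceCount R = (orbSet (faceMap R) G.darts).ncard + G.isolCount :=
    faceCount_eq R
  have hfr' : faceCount R' =
      (orbSet (faceMap R') (insert (x, y) (insert (y, x) G.darts))).ncard +
        (addE G x y hx hy hxy).isolCount := by
    rw [faceCount_eq, darts_addE]
  have hface : faceCount R' = faceCount R + 1 := by omega
  have heuler : eulerVal (addE G x y hx hy hxy) R' = eulerVal G R := by
    unfold eulerVal
    rw [hcomp, hedge, hface, h4v]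
    push_cast
    ring
  -- the new embedding is alternating, witnessed by the dart (x, y)
  have hAiter := split_iterate (z₁ := ((x, y) : ℕ × ℕ)) hbijφ hpD f2' f5' hi hmT hqm
  have hiter : ∀ s : ℕ, 1 ≤ s → s ≤ T - i →
      (faceMap R')^[s] (x, y) = (faceMap R)^[i + s - 1] d := by
    intro s hs1 hs2
    rw [hAiter s hs1 (by rw [hTp]; omega)]
    rw [hpdef, ← Function.iterate_add_apply, show i + s + (T - 1) = (i + s - 1) + T by omega,
      Function.iterate_add_apply, hTd]
  have hTdp : (faceMap R)^[T] p = p := by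
    have h2 := Function.iterate_minimalPeriod (f := faceMap R) (x := p)
    rwa [hTp] at h2
  have hper' : (faceMap R')^[T - i + 1] (x, y) = (x, y) := by
    have h1 : (faceMap R')^[T - i] (x, y) = p := by
      rw [hAiter (T - i) (by omega) (by rw [hTp]), show i + (T - i) = T by omega, hTdp]
    rw [Function.iterate_succ_apply', h1, f1']
  have hPpos : 0 < Function.minimalPeriod (faceMap R') (x, y) :=
    Function.IsPeriodicPt.minimalPeriod_pos (by omega) hper'
  have hPlarge : k - i + 1 < Function.minimalPeriod (faceMap R') (x, y) := by
    by_contra hcon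
    push_neg at hcon
    have h2 : (faceMap R')^[Function.minimalPeriod (faceMap R') (x, y)] (x, y) = (x, y) :=
      Function.iterate_minimalPeriod
    have h3 := hiter (Function.minimalPeriod (faceMap R') (x, y)) (by omega) (by omega)
    rw [h2] at h3
    exact hz₁D (by rw [h3]; exact iterate_mem hbijφ.mapsTo hd _)
  have hv1 : ((faceMap R')^[1] (x, y)).1 = y := by
    rw [hiter 1 le_rfl (by omega), show i + 1 - 1 = i by omega]
    exact hiy
  have hvj : ((faceMap R')^[j - i + 1] (x, y)).1 = x := by
    rw [hiter (j - i + 1) (by omega) (by omega), show i + (j - i + 1) - 1 = j by omega]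
    exact hjx
  have hvk : ((faceMap R')^[k - i + 1] (x, y)).1 = y := by
    rw [hiter (k - i + 1) (by omega) (by omega), show i + (k - i + 1) - 1 = k by omega]
    exact hky
  have hmem : ((x, y) : ℕ × ℕ) ∈ (addE G x y hx hy hxy).darts := by
    rw [darts_addE]
    exact Set.mem_insert _ _
  exact ⟨R', heuler, (x, y), hmem, rfl, 1, j - i + 1, k - i + 1, by omega, by omega,
    by omega, hPlarge, hv1, hvj, hvk⟩

end AltInsert

section FinalAux

open AltAux

lemma gp_le_g_add_one (G : TGraph) (h : G.NoXY) : G.plus.G.genus ≤ G.G.genus + 1 := by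
  obtain ⟨R, hR⟩ := genus_attained G.G
  obtain ⟨R', hR'⟩ := euler_addE (G := G.G) (x := G.x) (y := G.y) (hx := G.hx)
    (hy := G.hy) (hxy := G.hxy) h R
  have hEq : G.plus.G = addE G.G G.x G.y G.hx G.hy G.hxy := plus_eq_addE G
  rw [hEq]
  rcases hR' with h1 | h1
  · exact le_trans (genus_le ⟨R', by rw [h1, ← hR]⟩) (by omega)
  · refine genus_le ⟨R', ?_⟩
    rw [h1]
    push_cast
    omega

lemma alt_min (G : TGraph) (h : G.NoXY) (halt : IsXYAlt G) :
    G.plus.G.genus ≤ G.G.genus ∧ (G.plus.G.genus = G.G.genus → IsXYAlt G.plus) := by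
  obtain ⟨R, hmin, halt'⟩ := halt
  obtain ⟨R', heuler, halt''⟩ := insert_edge_alt (G := G.G) (x := G.x) (y := G.y)
    (hx := G.hx) (hy := G.hy) (hxy := G.hxy) h R halt'
  have hle : G.plus.G.genus ≤ G.G.genus := by
    have hEq : G.plus.G = addE G.G G.x G.y G.hx G.hy G.hxy := plus_eq_addE G
    rw [hEq]
    exact genus_le ⟨R', by rw [heuler, ← hmin]⟩
  refine ⟨hle, ?_⟩
  intro heq
  refine ⟨R', ?_, ?_⟩
  · show 2 * (G.plus.G.genus : ℤ) = eulerVal G.plus.G R'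
    rw [heq]
    calc 2 * (G.G.genus : ℤ) = eulerVal G.G R := hmin
    _ = eulerVal G.plus.G R' := by
        rw [show eulerVal G.plus.G R' = eulerVal (addE G.G G.x G.y G.hx G.hy G.hxy) R'
          from rfl, heuler]
  · exact halt''

end FinalAux

/-- Lemma (lm-alt-edge). -/
theorem gaP_lt_gapP_iff (G : TGraph) (h : G.NoXY) :
    gaP G < gapP G ↔ epspP G = 0 ∧ thetaP G = 1 := by
  classical
  have hg1 : G.plus.G.genus ≤ G.G.genus + 1 := gp_le_g_add_one G h
  unfold gaP gapP thetaP epspP epsP gP gpP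
  by_cases hε : IsXYAlt G
  · have halt := alt_min G h hε
    by_cases hε' : IsXYAlt G.plus
    · rw [if_pos hε, if_pos hε']
      constructor
      · intro hlt
        exfalso
        have h1 := halt.1
        omega
      · rintro ⟨h0, -⟩
        exact absurd h0 one_ne_zero
    · rw [if_pos hε, if_neg hε']
      constructor
      · intro hlt
        exfalso
        have h1 := halt.1
        have h2 : G.plus.G.genus = G.G.genus := by omega
        exact hε' (halt.2 h2)
      · rintro ⟨-, h1⟩
        exfalso
        have h2 := halt.1
        omega
  · by_cases hε' : IsXYAlt G.plus
    · rw [if_neg hε, if_pos hε']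
      constructor
      · intro hlt
        exfalso
        omega
      · rintro ⟨h0, -⟩
        exact absurd h0 one_ne_zero
    · rw [if_neg hε, if_neg hε']
      constructor
      · intro hlt
        refine ⟨rfl, ?_⟩
        omega
      · rintro ⟨-, h1⟩
        omega
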